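/- arXiv:2002.03967 — 6 statements merged into one kernel-verified Lean document; each statement's English description precedes it below -/
import Mathlib

section
/- Let n ∈ ℕ, μ, ν ∈ ℝⁿ histograms, and F : ℝ^{n×n} → ℝ a convex differentiable function. If π* minimizes F over Π(μ,ν), then the cost matrix c* = ∇F(π*) attains the supremum in the adversarial problem: OT_{c*}(μ,ν) − F*(c*) = min_{π∈Π(μ,ν)} F(π) = sup_{c ∈ ℝ^{n×n}} [ OT_c(μ,ν) − F*(c) ]. -/
open scoped BigOperators

/-- `μ` is a histogram: nonnegative entries summing to `1`. -/
def IsHistogram {n : ℕ} (μ : Fin n → ℝ) : Prop := (∀ i, 0 ≤ μ i) ∧ ∑ i, μ i = 1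

/-- The transportation polytope `Π(μ,ν)`: matrices with nonnegative entries,
row sums `μ` and column sums `ν`. -/
def DCouplings {n : ℕ} (μ ν : Fin n → ℝ) : Set (Fin n → Fin n → ℝ) :=
  {π | (∀ i j, 0 ≤ π i j) ∧ (∀ i, ∑ j, π i j = μ i) ∧ (∀ j, ∑ i, π i j = ν j)}

/-- Frobenius inner product `⟨c, π⟩`. -/
def frob {n : ℕ} (c π : Fin n → Fin n → ℝ) : ℝ := ∑ i, ∑ j, c i j * π i j

/-- Discrete optimal transport cost `OT_c(μ,ν)`. -/
noncomputable def dOT {n : ℕ} (c : Fin n → Fin n → ℝ) (μ ν : Fin n → ℝ) : ℝ :=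
  ⨅ π : DCouplings μ ν, frob c π.1

/-- Convex conjugate of `G : ℝ^{n×n} → ℝ ∪ {+∞}`. -/
noncomputable def dconj {n : ℕ} (G : (Fin n → Fin n → ℝ) → EReal)
    (c : Fin n → Fin n → ℝ) : EReal :=
  ⨆ π : Fin n → Fin n → ℝ, ((frob c π : ℝ) : EReal) - G π

section Aux

/-- Lower bound on a derivative from a one-sided slope bound. -/
lemma deriv_lower_aux {φ : ℝ → ℝ} {d a : ℝ} (hd : HasDerivAt φ d 0)
    (h : ∀ t ∈ Set.Ioc (0:ℝ) 1, a * t ≤ φ t - φ 0) : a ≤ d := by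
  have h1 : HasDerivWithinAt φ d (Set.Ioi 0) 0 := hd.hasDerivWithinAt
  rw [hasDerivWithinAt_iff_tendsto_slope] at h1
  rw [show Set.Ioi (0:ℝ) \ {0} = Set.Ioi 0 from Set.diff_singleton_eq_self (by simp)] at h1
  refine ge_of_tendsto h1 ?_
  have hmem : Set.Ioc (0:ℝ) 1 ∈ nhdsWithin 0 (Set.Ioi (0:ℝ)) :=
    Ioc_mem_nhdsGT_of_mem (by simp)
  filter_upwards [hmem] with t ht
  have ht0 : 0 < t := ht.1
  rw [slope_def_field]
  rw [sub_zero, le_div_iff₀ ht0]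
  exact h t ht

/-- Upper bound on a derivative from a one-sided slope bound. -/
lemma deriv_upper_aux {φ : ℝ → ℝ} {d a : ℝ} (hd : HasDerivAt φ d 0)
    (h : ∀ t ∈ Set.Ioc (0:ℝ) 1, φ t - φ 0 ≤ a * t) : d ≤ a := by
  have h1 : HasDerivWithinAt φ d (Set.Ioi 0) 0 := hd.hasDerivWithinAt
  rw [hasDerivWithinAt_iff_tendsto_slope] at h1
  rw [show Set.Ioi (0:ℝ) \ {0} = Set.Ioi 0 from Set.diff_singleton_eq_self (by simp)] at h1
  refine le_of_tendsto h1 ?_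
  have hmem : Set.Ioc (0:ℝ) 1 ∈ nhdsWithin 0 (Set.Ioi (0:ℝ)) :=
    Ioc_mem_nhdsGT_of_mem (by simp)
  filter_upwards [hmem] with t ht
  have ht0 : 0 < t := ht.1
  rw [slope_def_field]
  rw [sub_zero, div_le_iff₀ ht0]
  exact h t ht

/-- Derivative of `t ↦ F (x + t • v)` at `0`. -/
lemma hasDerivAt_line_aux {n : ℕ} {F : (Fin n → Fin n → ℝ) → ℝ} (hdiff : Differentiable ℝ F)
    (x v : Fin n → Fin n → ℝ) :
    HasDerivAt (fun t : ℝ => F (x + t • v)) (fderiv ℝ F x v) 0 := by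
  have hl : HasDerivAt (fun t : ℝ => x + t • v) v 0 := by
    simpa using ((hasDerivAt_id (0:ℝ)).smul_const v).const_add x
  have h := (hdiff (x + (0:ℝ) • v)).hasFDerivAt.comp_hasDerivAt 0 hl
  simpa [Function.comp_def] using h

/-- Subgradient inequality for a convex differentiable function. -/
lemma subgrad_aux {n : ℕ} {F : (Fin n → Fin n → ℝ) → ℝ}
    (hconv : ConvexOn ℝ Set.univ F) (hdiff : Differentiable ℝ F)
    (x v : Fin n → Fin n → ℝ) : fderiv ℝ F x v ≤ F (x + v) - F x := by
  refine deriv_upper_aux (hasDerivAt_line_aux hdiff x v) ?_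
  intro t ht
  have h := hconv.2 (Set.mem_univ x) (Set.mem_univ (x + v))
    (show (0:ℝ) ≤ 1 - t by linarith [ht.2]) (le_of_lt ht.1) (by ring)
  have hpt : (1 - t) • x + t • (x + v) = x + t • v := by
    ext i j
    simp only [Pi.add_apply, Pi.smul_apply, smul_eq_mul]
    ring
  rw [hpt] at h
  have h2 : F (x + t • v) ≤ F x + t * (F (x + v) - F x) := by
    have : (1 - t) • F x + t • F (x + v) = F x + t * (F (x + v) - F x) := by
      simp only [smul_eq_mul]; ring
    linarith [h, this.le, this.ge]
  simp only [zero_smul, add_zero]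
  nlinarith [h2]

/-- Decomposition of a matrix into single-entry matrices. -/
lemma decomp_aux {n : ℕ} (v : Fin n → Fin n → ℝ) :
    ∑ i, ∑ j, v i j • (Pi.single i (Pi.single j 1) : Fin n → Fin n → ℝ) = v := by
  funext a b
  simp only [Finset.sum_apply, Pi.smul_apply, smul_eq_mul, Pi.single_apply]
  simp [apply_ite (fun f : Fin n → ℝ => f b), Pi.single_apply, Finset.sum_ite_eq', mul_ite]

end Aux

/-- If `F : ℝ^{n×n} → ℝ` is convex and differentiable and `π*` minimizes `F`
over `Π(μ,ν)`, then `c* = ∇F(π*)` attains the supremum in the adversarial problem: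
`OT_{c*}(μ,ν) − F*(c*) = min_{π∈Π(μ,ν)} F(π) = sup_c OT_c(μ,ν) − F*(c)`. -/
theorem stmt4 {n : ℕ} (μ ν : Fin n → ℝ) (hμ : IsHistogram μ) (hν : IsHistogram ν)
    (F : (Fin n → Fin n → ℝ) → ℝ)
    (hconv : ConvexOn ℝ Set.univ F)
    (hdiff : Differentiable ℝ F)
    (πstar : Fin n → Fin n → ℝ) (hπ : πstar ∈ DCouplings μ ν)
    (hmin : ∀ π ∈ DCouplings μ ν, F πstar ≤ F π)
    (cstar : Fin n → Fin n → ℝ)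
    (hc : cstar = fun i j => fderiv ℝ F πstar (Pi.single i (Pi.single j 1))) :
    ((dOT cstar μ ν : ℝ) : EReal) - dconj (fun π => ((F π : ℝ) : EReal)) cstar
        = ((F πstar : ℝ) : EReal) ∧
    ((F πstar : ℝ) : EReal) =
      ⨆ c : Fin n → Fin n → ℝ,
        ((dOT c μ ν : ℝ) : EReal) - dconj (fun π => ((F π : ℝ) : EReal)) c := by
  -- fderiv at πstar agrees with frob cstar
  have hDfrob : ∀ v, frob cstar v = fderiv ℝ F πstar v := by
    intro v
    conv_rhs => rw [← decomp_aux v]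
    rw [map_sum]
    simp only [map_sum, map_smul, smul_eq_mul]
    simp only [frob, hc]
    exact Finset.sum_congr rfl fun i _ => Finset.sum_congr rfl fun j _ => mul_comm _ _
  -- frob is linear in the second argument (subtraction)
  have hfrob_sub : ∀ c π₁ π₂ : Fin n → Fin n → ℝ,
      frob c (π₁ - π₂) = frob c π₁ - frob c π₂ := by
    intro c π₁ π₂
    simp [frob, mul_sub, Finset.sum_sub_distrib]
  -- subgradient inequality
  have hsub : ∀ π : Fin n → Fin n → ℝ,
      frob cstar π - frob cstar πstar ≤ F π - F πstar := by
    intro π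
    have := subgrad_aux hconv hdiff πstar (π - πstar)
    rw [← hDfrob, hfrob_sub] at this
    simpa using this
  -- first order condition
  have hFOC : ∀ π ∈ DCouplings μ ν, frob cstar πstar ≤ frob cstar π := by
    intro π hmem
    have hd : HasDerivAt (fun t : ℝ => F (πstar + t • (π - πstar)))
        (fderiv ℝ F πstar (π - πstar)) 0 := hasDerivAt_line_aux hdiff πstar (π - πstar)
    have h0 : (0:ℝ) ≤ fderiv ℝ F πstar (π - πstar) := by
      refine deriv_lower_aux hd ?_
      intro t ht
      rw [zero_mul, sub_nonneg]
      have hmem' : πstar + t • (π - πstar) ∈ DCouplings μ ν := by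
        refine ⟨fun i j => ?_, fun i => ?_, fun j => ?_⟩
        · have : πstar i j + t * (π i j - πstar i j)
              = (1 - t) * πstar i j + t * π i j := by ring
          simp only [Pi.add_apply, Pi.smul_apply, Pi.sub_apply, smul_eq_mul, this]
          have := hπ.1 i j
          have := hmem.1 i j
          nlinarith [ht.1, ht.2]
        · simp only [Pi.add_apply, Pi.smul_apply, Pi.sub_apply, smul_eq_mul]
          rw [Finset.sum_add_distrib, ← Finset.mul_sum, Finset.sum_sub_distrib,
            hπ.2.1 i, hmem.2.1 i]
          ring
        · simp only [Pi.add_apply, Pi.smul_apply, Pi.sub_apply, smul_eq_mul]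
          rw [Finset.sum_add_distrib, ← Finset.mul_sum, Finset.sum_sub_distrib,
            hπ.2.2 j, hmem.2.2 j]
          ring
      have := hmin _ hmem'
      simpa using this
    rw [← hDfrob, hfrob_sub] at h0
    linarith
  -- couplings entries are at most 1
  have hentry : ∀ π ∈ DCouplings μ ν, ∀ i j, π i j ≤ 1 := by
    intro π hmem i j
    have h1 : π i j ≤ ∑ j', π i j' :=
      Finset.single_le_sum (fun j' _ => hmem.1 i j') (Finset.mem_univ j)
    have h2 : μ i ≤ ∑ i', μ i' :=
      Finset.single_le_sum (fun i' _ => hμ.1 i') (Finset.mem_univ i)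
    rw [hμ.2] at h2
    rw [hmem.2.1 i] at h1
    linarith
  -- boundedness below of frob over couplings
  have hbdd : ∀ c : Fin n → Fin n → ℝ,
      BddBelow (Set.range fun π : DCouplings μ ν => frob c π.1) := by
    intro c
    refine ⟨-(∑ i, ∑ j, |c i j|), ?_⟩
    rintro x ⟨⟨π, hmem⟩, rfl⟩
    simp only [frob, neg_le]
    rw [← Finset.sum_neg_distrib]
    refine Finset.sum_le_sum fun i _ => ?_
    rw [← Finset.sum_neg_distrib]
    refine Finset.sum_le_sum fun j _ => ?_
    have h0 := hmem.1 i j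
    have h1 := hentry π hmem i j
    have h2 : -|c i j| ≤ c i j := neg_abs_le _
    have h3 : (0:ℝ) ≤ |c i j| := abs_nonneg _
    nlinarith
  have hdOT_le : ∀ c : Fin n → Fin n → ℝ, dOT c μ ν ≤ frob c πstar := by
    intro c
    exact ciInf_le (hbdd c) ⟨πstar, hπ⟩
  haveI : Nonempty (DCouplings μ ν) := ⟨⟨πstar, hπ⟩⟩
  have hdOT_star : dOT cstar μ ν = frob cstar πstar := by
    refine le_antisymm (hdOT_le cstar) ?_
    exact le_ciInf fun π => hFOC π.1 π.2
  -- conjugate at cstar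
  have hconj : dconj (fun π => ((F π : ℝ) : EReal)) cstar
      = ((frob cstar πstar - F πstar : ℝ) : EReal) := by
    refine le_antisymm ?_ ?_
    · refine iSup_le fun π => ?_
      rw [← EReal.coe_sub, EReal.coe_le_coe_iff]
      have := hsub π
      linarith
    · rw [EReal.coe_sub]
      exact le_iSup (fun π => ((frob cstar π : ℝ) : EReal) - ((F π : ℝ) : EReal)) πstar
  have hconj' : ∀ c, ((frob c πstar - F πstar : ℝ) : EReal)
      ≤ dconj (fun π => ((F π : ℝ) : EReal)) c := by
    intro c
    rw [EReal.coe_sub]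
    exact le_iSup (fun π => ((frob c π : ℝ) : EReal) - ((F π : ℝ) : EReal)) πstar
  have part1 : ((dOT cstar μ ν : ℝ) : EReal) - dconj (fun π => ((F π : ℝ) : EReal)) cstar
      = ((F πstar : ℝ) : EReal) := by
    rw [hconj, hdOT_star, ← EReal.coe_sub]
    norm_cast
    ring
  refine ⟨part1, le_antisymm ?_ ?_⟩
  · rw [← part1]
    exact le_iSup (fun c => ((dOT c μ ν : ℝ) : EReal)
      - dconj (fun π => ((F π : ℝ) : EReal)) c) cstar
  · refine iSup_le fun c => ?_
    calc ((dOT c μ ν : ℝ) : EReal) - dconj (fun π => ((F π : ℝ) : EReal)) c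
        ≤ ((dOT c μ ν : ℝ) : EReal) - ((frob c πstar - F πstar : ℝ) : EReal) :=
          EReal.sub_le_sub le_rfl (hconj' c)
      _ = ((dOT c μ ν - (frob c πstar - F πstar) : ℝ) : EReal) := by norm_cast
      _ ≤ ((F πstar : ℝ) : EReal) := by
          rw [EReal.coe_le_coe_iff]
          have := hdOT_le c
          linarith
end

section
/- (Nonnegative adversarial cost linearizes the regularizer at short range.) Let n ∈ ℕ, μ, ν ∈ ℝⁿ histograms, c₀ ∈ ℝ^{n×n}, ε > 0, and for each i,j let R_{ij} : ℝ → ℝ be convex and differentiable, with convex conjugate R_{ij}*(y) = sup_{x∈ℝ} (xy − R_{ij}(x)); assume R_{ij}* is finite and differentiable at −(c₀)_{ij}/ε, with derivative t_{ij} = (R_{ij}*)'(−(c₀)_{ij}/ε). Define R̂_{ij}(x) = R_{ij}(x) if x ≥ t_{ij}, and R̂_{ij}(x) = (−(c₀)_{ij}/ε)·x − R_{ij}*(−(c₀)_{ij}/ε) otherwise. Then sup_{c ∈ ℝ^{n×n}, c ≥ 0 entrywise} [ OT_c(μ,ν) − ε Σ_{ij} R_{ij}*((c_{ij} − (c₀)_{ij})/ε)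 ] = min_{π∈Π(μ,ν)} [ ⟨c₀,π⟩ + ε Σ_{ij} R̂_{ij}(π_{ij}) ], and each R̂_{ij} is continuous and convex. -/
open scoped BigOperators

/-- Convex conjugate `f*` of a scalar function `f : ℝ → ℝ`. -/
noncomputable def rconj (f : ℝ → ℝ) (y : ℝ) : EReal :=
  ⨆ x : ℝ, ((x * y - f x : ℝ) : EReal)

/-- Short-range linearization `R̂` of a scalar regularizer `f`:
equal to `f` above the threshold `t` and affine (slope `y₀`) below it. -/
noncomputable def rhat (f : ℝ → ℝ) (y₀ t : ℝ) (x : ℝ) : ℝ :=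
  if t ≤ x then f x else y₀ * x - (rconj f y₀).toReal

lemma le_rconj (f : ℝ → ℝ) (y x : ℝ) : ((x * y - f x : ℝ) : EReal) ≤ rconj f y :=
  le_iSup (fun x : ℝ => ((x * y - f x : ℝ) : EReal)) x

lemma rconj_ne_bot (f : ℝ → ℝ) (y : ℝ) : rconj f y ≠ ⊥ := by
  intro h
  have := le_rconj f y 0
  rw [h, le_bot_iff] at this
  exact EReal.coe_ne_bot _ this

section scalar
variable {f : ℝ → ℝ} {y₀ t : ℝ}

/-- tangent inequality for the conjugate -/
lemma rconj_tangent (hfin : rconj f y₀ ≠ ⊤)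
    (ht : HasDerivAt (fun y => (rconj f y).toReal) t y₀) (y : ℝ) :
    (((rconj f y₀).toReal + t * (y - y₀) : ℝ) : EReal) ≤ rconj f y := by
  set A := (rconj f y₀).toReal with hA
  have hAco : ((A : ℝ) : EReal) = rconj f y₀ := EReal.coe_toReal hfin (rconj_ne_bot f y₀)
  by_contra hcon
  push_neg at hcon
  have hytop : rconj f y ≠ ⊤ := (hcon.trans (EReal.coe_lt_top _)).ne
  set B := (rconj f y).toReal with hB
  have hBco : ((B : ℝ) : EReal) = rconj f y := EReal.coe_toReal hytop (rconj_ne_bot f y)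
  have hBlt : B < A + t * (y - y₀) := by
    rw [← EReal.coe_lt_coe_iff, hBco]; exact hcon
  -- the auxiliary function g
  set g : ℝ → ℝ := fun s => (rconj f (y₀ + s * (y - y₀))).toReal with hg
  have hxle : ∀ x : ℝ, x * y₀ - f x ≤ A := by
    intro x
    rw [← EReal.coe_le_coe_iff, hAco]; exact le_rconj f y₀ x
  have hxleB : ∀ x : ℝ, x * y - f x ≤ B := by
    intro x
    rw [← EReal.coe_le_coe_iff, hBco]; exact le_rconj f y x
  have hgub : ∀ s ∈ Set.Icc (0:ℝ) 1, g s ≤ (1 - s) * A + s * B := by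
    intro s hs
    obtain ⟨hs0, hs1⟩ := hs
    have hle : rconj f (y₀ + s * (y - y₀)) ≤ (((1 - s) * A + s * B : ℝ) : EReal) := by
      refine iSup_le fun x => ?_
      rw [EReal.coe_le_coe_iff]
      have h1 := hxle x
      have h2 := hxleB x
      nlinarith [mul_le_mul_of_nonneg_left h1 (by linarith : (0:ℝ) ≤ 1 - s),
        mul_le_mul_of_nonneg_left h2 hs0]
    have := EReal.toReal_le_toReal hle (rconj_ne_bot _ _) (EReal.coe_ne_top _)
    rw [EReal.toReal_coe] at this
    exact this
  have hg0 : g 0 = A := by simp [hg, hA]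
  -- derivative of g at 0
  have hinner : HasDerivAt (fun s : ℝ => y₀ + s * (y - y₀)) (y - y₀) 0 := by
    simpa using ((hasDerivAt_id (0:ℝ)).mul_const (y - y₀)).const_add y₀
  have hgd : HasDerivAt g (t * (y - y₀)) 0 := by
    have := HasDerivAt.comp (0:ℝ) (by simpa using ht) hinner
    exact this
  -- slope bound from the right
  have hslope : Filter.Tendsto (slope g 0) (nhdsWithin 0 (Set.Ioi 0)) (nhds (t * (y - y₀))) := by
    have := hasDerivAt_iff_tendsto_slope.mp hgd
    exact this.mono_left (nhdsWithin_mono 0 (fun x hx => ne_of_gt hx))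
  have hub : ∀ᶠ s in nhdsWithin (0:ℝ) (Set.Ioi 0), slope g 0 s ≤ B - A := by
    filter_upwards [Ioc_mem_nhdsGT_of_mem (Set.mem_Ico.mpr ⟨le_refl 0, zero_lt_one⟩)] with s hs
    rcases hs with ⟨hs0, hs1⟩
    have hgs := hgub s ⟨hs0.le, hs1⟩
    rw [slope_def_field]
    rw [div_le_iff₀ (by linarith : (0:ℝ) < s - 0)]
    rw [hg0]
    nlinarith
  have := le_of_tendsto hslope hub
  nlinarith [this, hBlt]

variable (hconv : ConvexOn ℝ Set.univ f) (hdiff : Differentiable ℝ f)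

/-- tangent line below a convex differentiable function -/
lemma convex_tangent_le (hconv : ConvexOn ℝ Set.univ f) (hdiff : Differentiable ℝ f)
    (x z : ℝ) : f x + deriv f x * (z - x) ≤ f z := by
  rcases lt_trichotomy x z with h | h | h
  · have := hconv.deriv_le_slope (Set.mem_univ x) (Set.mem_univ z) h (hdiff x)
    rw [slope_def_field, le_div_iff₀ (by linarith : (0:ℝ) < z - x)] at this
    nlinarith
  · simp [h]
  · have := hconv.slope_le_deriv (Set.mem_univ z) (Set.mem_univ x) h (hdiff x)
    rw [slope_def_field, div_le_iff₀ (by linarith : (0:ℝ) < x - z)] at this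
    nlinarith

/-- the conjugate at the derivative: Fenchel equality -/
lemma rconj_deriv (hconv : ConvexOn ℝ Set.univ f) (hdiff : Differentiable ℝ f) (x : ℝ) :
    rconj f (deriv f x) = ((x * deriv f x - f x : ℝ) : EReal) := by
  refine le_antisymm (iSup_le fun z => ?_) (le_rconj f (deriv f x) x)
  rw [EReal.coe_le_coe_iff]
  have := convex_tangent_le hconv hdiff x z
  nlinarith

end scalar

section pack
variable {f : ℝ → ℝ} {y₀ t : ℝ}
variable (hconv : ConvexOn ℝ Set.univ f) (hdiff : Differentiable ℝ f)
variable (hfin : rconj f y₀ ≠ ⊤)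
variable (ht : HasDerivAt (fun y => (rconj f y).toReal) t y₀)

/-- Fenchel equality at the threshold. -/
lemma rconj_toReal_eq (hconv : ConvexOn ℝ Set.univ f) (hdiff : Differentiable ℝ f)
    (hfin : rconj f y₀ ≠ ⊤) (ht : HasDerivAt (fun y => (rconj f y).toReal) t y₀) :
    (rconj f y₀).toReal = t * y₀ - f t := by
  set A := (rconj f y₀).toReal with hA
  have hAco : ((A : ℝ) : EReal) = rconj f y₀ := EReal.coe_toReal hfin (rconj_ne_bot f y₀)
  have hge : t * y₀ - f t ≤ A := by
    rw [← EReal.coe_le_coe_iff, hAco]; exact le_rconj f y₀ t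
  have hle : A ≤ t * y₀ - f t := by
    have h1 := rconj_tangent hfin ht (deriv f t)
    rw [rconj_deriv hconv hdiff t, EReal.coe_le_coe_iff] at h1
    nlinarith
  linarith

/-- The derivative of `f` at the threshold equals `y₀`. -/
lemma deriv_at_t (hconv : ConvexOn ℝ Set.univ f) (hdiff : Differentiable ℝ f)
    (hfin : rconj f y₀ ≠ ⊤) (ht : HasDerivAt (fun y => (rconj f y).toReal) t y₀) :
    deriv f t = y₀ := by
  set A := (rconj f y₀).toReal with hA
  have hAco : ((A : ℝ) : EReal) = rconj f y₀ := EReal.coe_toReal hfin (rconj_ne_bot f y₀)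
  have hxle : ∀ x : ℝ, x * y₀ - f x ≤ A := by
    intro x; rw [← EReal.coe_le_coe_iff, hAco]; exact le_rconj f y₀ x
  have hft : A = t * y₀ - f t := rconj_toReal_eq hconv hdiff hfin ht
  -- the function x ↦ x * y₀ - f x has a maximum at t
  have hmax : IsMaxOn (fun x : ℝ => x * y₀ - f x) Set.univ t := by
    intro x _
    simp only [Set.mem_setOf_eq]
    have := hxle x
    rw [hft] at this
    linarith
  have hd : HasDerivAt (fun x : ℝ => x * y₀ - f x) (y₀ - deriv f t) t := by
    simpa using ((hasDerivAt_id t).mul_const y₀).fun_sub (hdiff t).hasDerivAt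
  have := (hmax.isLocalMax (Filter.univ_mem)).hasDerivAt_eq_zero hd
  linarith

/-- Fenchel–Young inequality with the affine minorant. -/
lemma affine_le (hfin : rconj f y₀ ≠ ⊤) (x : ℝ) :
    y₀ * x - (rconj f y₀).toReal ≤ f x := by
  have hAco : (((rconj f y₀).toReal : ℝ) : EReal) = rconj f y₀ :=
    EReal.coe_toReal hfin (rconj_ne_bot f y₀)
  have : x * y₀ - f x ≤ (rconj f y₀).toReal := by
    rw [← EReal.coe_le_coe_iff, hAco]; exact le_rconj f y₀ x
  linarith

lemma rhat_continuous (hconv : ConvexOn ℝ Set.univ f) (hdiff : Differentiable ℝ f)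
    (hfin : rconj f y₀ ≠ ⊤) (ht : HasDerivAt (fun y => (rconj f y).toReal) t y₀) :
    Continuous (rhat f y₀ t) := by
  have hft := rconj_toReal_eq hconv hdiff hfin ht
  refine Continuous.if_le hdiff.continuous
    (by continuity) continuous_const continuous_id fun x hx => ?_
  subst hx
  rw [hft]; ring

/-- the derivative of `rhat` -/
lemma rhat_hasDerivAt (hconv : ConvexOn ℝ Set.univ f) (hdiff : Differentiable ℝ f)
    (hfin : rconj f y₀ ≠ ⊤) (ht : HasDerivAt (fun y => (rconj f y).toReal) t y₀) (x : ℝ) :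
    HasDerivAt (rhat f y₀ t) (if t ≤ x then deriv f x else y₀) x := by
  set A := (rconj f y₀).toReal with hA
  have hft : A = t * y₀ - f t := rconj_toReal_eq hconv hdiff hfin ht
  have hdt : deriv f t = y₀ := deriv_at_t hconv hdiff hfin ht
  have hL : ∀ z : ℝ, HasDerivAt (fun w : ℝ => y₀ * w - A) y₀ z := by
    intro z
    simpa using ((hasDerivAt_id z).const_mul y₀).sub_const A
  have hrhat : ∀ z : ℝ, rhat f y₀ t z = if t ≤ z then f z else y₀ * z - A := fun z => rfl
  rcases lt_trichotomy x t with h | h | h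
  · -- x < t : rhat = affine near x
    rw [if_neg (not_le.mpr h)]
    refine (hL x).congr_of_eventuallyEq ?_
    filter_upwards [eventually_lt_nhds h] with z hz
    rw [hrhat, if_neg (not_le.mpr hz)]
  · -- x = t
    subst h
    have h1 : HasDerivWithinAt (rhat f y₀ x) (deriv f x) (Set.Ici x) x := by
      refine ((hdiff x).hasDerivAt.hasDerivWithinAt).congr (fun z hz => ?_) ?_
      · rw [hrhat, if_pos (Set.mem_Ici.mp hz)]
      · rw [hrhat, if_pos le_rfl]
    have h2 : HasDerivWithinAt (rhat f y₀ x) (deriv f x) (Set.Iic x) x := by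
      rw [hdt]
      refine ((hL x).hasDerivWithinAt).congr (fun z hz => ?_) ?_
      · rcases eq_or_lt_of_le (Set.mem_Iic.mp hz) with rfl | hlt
        · rw [hrhat, if_pos le_rfl, hft]; ring
        · rw [hrhat, if_neg (not_le.mpr hlt)]
      · rw [hrhat, if_pos le_rfl, hft]; ring
    have h3 := h2.union h1
    rw [Set.Iic_union_Ici, hasDerivWithinAt_univ] at h3
    rw [if_pos le_rfl]
    exact h3
  · -- t < x : rhat = f near x
    rw [if_pos h.le]
    refine ((hdiff x).hasDerivAt).congr_of_eventuallyEq ?_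
    filter_upwards [eventually_gt_nhds h] with z hz
    rw [hrhat, if_pos hz.le]

lemma deriv_f_mono (hconv : ConvexOn ℝ Set.univ f) (hdiff : Differentiable ℝ f) :
    Monotone (deriv f) := by
  have := hconv.monotoneOn_deriv (fun x _ => hdiff x)
  exact monotoneOn_univ.mp this

lemma rprime_mono (hconv : ConvexOn ℝ Set.univ f) (hdiff : Differentiable ℝ f)
    (hfin : rconj f y₀ ≠ ⊤) (ht : HasDerivAt (fun y => (rconj f y).toReal) t y₀) :
    Monotone (fun x : ℝ => if t ≤ x then deriv f x else y₀) := by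
  have hdt : deriv f t = y₀ := deriv_at_t hconv hdiff hfin ht
  have hmono := deriv_f_mono hconv hdiff
  intro a b hab
  dsimp only
  by_cases hta : t ≤ a
  · rw [if_pos hta, if_pos (hta.trans hab)]
    exact hmono hab
  · rw [if_neg hta]
    by_cases htb : t ≤ b
    · rw [if_pos htb, ← hdt]
      exact hmono htb
    · rw [if_neg htb]

lemma rprime_ge (hconv : ConvexOn ℝ Set.univ f) (hdiff : Differentiable ℝ f)
    (hfin : rconj f y₀ ≠ ⊤) (ht : HasDerivAt (fun y => (rconj f y).toReal) t y₀) (x : ℝ) :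
    y₀ ≤ (if t ≤ x then deriv f x else y₀) := by
  have hdt : deriv f t = y₀ := deriv_at_t hconv hdiff hfin ht
  by_cases htx : t ≤ x
  · rw [if_pos htx, ← hdt]; exact deriv_f_mono hconv hdiff htx
  · rw [if_neg htx]

lemma rhat_convexOn (hconv : ConvexOn ℝ Set.univ f) (hdiff : Differentiable ℝ f)
    (hfin : rconj f y₀ ≠ ⊤) (ht : HasDerivAt (fun y => (rconj f y).toReal) t y₀) :
    ConvexOn ℝ Set.univ (rhat f y₀ t) := by
  have hd : ∀ x, HasDerivAt (rhat f y₀ t) (if t ≤ x then deriv f x else y₀) x :=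
    rhat_hasDerivAt hconv hdiff hfin ht
  have hdiff' : Differentiable ℝ (rhat f y₀ t) := fun x => (hd x).differentiableAt
  have hderiv : deriv (rhat f y₀ t) = fun x => if t ≤ x then deriv f x else y₀ :=
    funext fun x => (hd x).deriv
  refine Monotone.convexOn_univ_of_deriv hdiff' ?_
  rw [hderiv]
  exact rprime_mono hconv hdiff hfin ht

/-- value of the conjugate at a slope of `rhat` (Fenchel equality). -/
lemma rconj_rprime (hconv : ConvexOn ℝ Set.univ f) (hdiff : Differentiable ℝ f)
    (hfin : rconj f y₀ ≠ ⊤) (ht : HasDerivAt (fun y => (rconj f y).toReal) t y₀) (p : ℝ) :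
    rconj f (if t ≤ p then deriv f p else y₀)
      = ((p * (if t ≤ p then deriv f p else y₀) - rhat f y₀ t p : ℝ) : EReal) := by
  have hrhat : ∀ z : ℝ, rhat f y₀ t z = if t ≤ z then f z else y₀ * z - (rconj f y₀).toReal :=
    fun z => rfl
  by_cases htp : t ≤ p
  · simp only [if_pos htp, hrhat]
    exact rconj_deriv hconv hdiff p
  · simp only [if_neg htp, hrhat]
    have : (p * y₀ - (y₀ * p - (rconj f y₀).toReal) : ℝ) = (rconj f y₀).toReal := by ring
    rw [this]
    exact (EReal.coe_toReal hfin (rconj_ne_bot f y₀)).symm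

/-- weak-duality scalar inequality: for `y ≥ y₀`,  `p y - rhat p ≤ f*(y)` -/
lemma weak_scalar (hconv : ConvexOn ℝ Set.univ f) (hdiff : Differentiable ℝ f)
    (hfin : rconj f y₀ ≠ ⊤) (ht : HasDerivAt (fun y => (rconj f y).toReal) t y₀)
    {y : ℝ} (hy : y₀ ≤ y) (p : ℝ) :
    ((p * y - rhat f y₀ t p : ℝ) : EReal) ≤ rconj f y := by
  have hrhat : ∀ z : ℝ, rhat f y₀ t z = if t ≤ z then f z else y₀ * z - (rconj f y₀).toReal :=
    fun z => rfl
  by_cases htp : t ≤ p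
  · rw [hrhat, if_pos htp]
    exact le_rconj f y p
  · rw [hrhat, if_neg htp]
    refine le_trans ?_ (rconj_tangent hfin ht y)
    rw [EReal.coe_le_coe_iff]
    push_neg at htp
    nlinarith [mul_le_mul_of_nonneg_right htp.le (sub_nonneg.mpr hy)]

end pack
section helpers
open Finset

lemma esum_coe {α : Type*} (s : Finset α) (g : α → ℝ) :
    ∑ a ∈ s, ((g a : ℝ) : EReal) = ((∑ a ∈ s, g a : ℝ) : EReal) := by
  classical
  induction s using Finset.induction_on with
  | empty => simp
  | insert _ _ hne ih => rw [Finset.sum_insert hne, Finset.sum_insert hne, ih, EReal.coe_add]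

lemma esum_ne_bot {α : Type*} (s : Finset α) (g : α → EReal) (h : ∀ a ∈ s, g a ≠ ⊥) :
    ∑ a ∈ s, g a ≠ ⊥ := by
  classical
  induction s using Finset.induction_on with
  | empty => simp
  | @insert a s hne ih =>
    rw [Finset.sum_insert hne]
    rw [Ne, EReal.add_eq_bot_iff]
    push_neg
    exact ⟨h a (Finset.mem_insert_self a s),
      ih fun b hb => h b (Finset.mem_insert_of_mem hb)⟩

lemma esum_eq_top {α : Type*} (s : Finset α) (g : α → EReal) {a : α} (ha : a ∈ s)
    (htop : g a = ⊤) (h : ∀ b ∈ s, g b ≠ ⊥) : ∑ b ∈ s, g b = ⊤ := by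
  classical
  rw [← Finset.add_sum_erase s g ha, htop]
  exact EReal.top_add_of_ne_bot
    (esum_ne_bot _ _ fun b hb => h b (Finset.mem_of_mem_erase hb))

lemma dsum_congr {n : ℕ} {g h : Fin n → Fin n → ℝ} (hgh : ∀ i j, g i j = h i j) :
    ∑ i, ∑ j, g i j = ∑ i, ∑ j, h i j := by
  refine Finset.sum_congr rfl fun i _ => Finset.sum_congr rfl fun j _ => hgh i j

lemma dsum_add {n : ℕ} (g h : Fin n → Fin n → ℝ) :
    ∑ i, ∑ j, (g i j + h i j) = (∑ i, ∑ j, g i j) + ∑ i, ∑ j, h i j := by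
  simp [Finset.sum_add_distrib]

lemma dsum_sub {n : ℕ} (g h : Fin n → Fin n → ℝ) :
    ∑ i, ∑ j, (g i j - h i j) = (∑ i, ∑ j, g i j) - ∑ i, ∑ j, h i j := by
  simp [Finset.sum_sub_distrib]

lemma dsum_mul {n : ℕ} (c : ℝ) (g : Fin n → Fin n → ℝ) :
    c * ∑ i, ∑ j, g i j = ∑ i, ∑ j, c * g i j := by
  simp [Finset.mul_sum]

lemma dsum_le {n : ℕ} {g h : Fin n → Fin n → ℝ} (hgh : ∀ i j, g i j ≤ h i j) :
    ∑ i, ∑ j, g i j ≤ ∑ i, ∑ j, h i j :=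
  Finset.sum_le_sum fun i _ => Finset.sum_le_sum fun j _ => hgh i j

end helpers

section frobl

lemma frob_line {n : ℕ} (c π d : Fin n → Fin n → ℝ) (s : ℝ) :
    frob c (fun i j => π i j + s * d i j) = frob c π + s * frob c d := by
  have h : ∀ i j, c i j * (π i j + s * d i j) = c i j * π i j + s * (c i j * d i j) := by
    intro i j; ring
  rw [frob, dsum_congr h, dsum_add, frob, frob, dsum_mul]

lemma frob_nonneg {n : ℕ} {c π : Fin n → Fin n → ℝ} (hc : ∀ i j, 0 ≤ c i j)
    (hπ : ∀ i j, 0 ≤ π i j) : 0 ≤ frob c π := by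
  refine Finset.sum_nonneg fun i _ => Finset.sum_nonneg fun j _ => mul_nonneg (hc i j) (hπ i j)

/-- The product coupling. -/
lemma prod_mem_DCouplings {n : ℕ} {μ ν : Fin n → ℝ} (hμ : IsHistogram μ) (hν : IsHistogram ν) :
    (fun i j => μ i * ν j) ∈ DCouplings μ ν := by
  refine ⟨fun i j => mul_nonneg (hμ.1 i) (hν.1 j), fun i => ?_, fun j => ?_⟩
  · rw [← Finset.mul_sum, hν.2, mul_one]
  · rw [← Finset.sum_mul, hμ.2, one_mul]

lemma DCouplings_entry_le {n : ℕ} {μ ν : Fin n → ℝ} (hμ : IsHistogram μ)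
    {π : Fin n → Fin n → ℝ} (hπ : π ∈ DCouplings μ ν) (i j : Fin n) : π i j ≤ 1 := by
  have h1 : π i j ≤ ∑ j', π i j' :=
    Finset.single_le_sum (fun j' _ => hπ.1 i j') (Finset.mem_univ j)
  have h2 : μ i ≤ ∑ i', μ i' :=
    Finset.single_le_sum (fun i' _ => hμ.1 i') (Finset.mem_univ i)
  rw [hπ.2.1 i] at h1
  rw [hμ.2] at h2
  linarith

lemma DCouplings_convex {n : ℕ} (μ ν : Fin n → ℝ) : Convex ℝ (DCouplings μ ν) := by
  rintro π hπ ρ hρ a b ha hb hab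
  refine ⟨fun i j => ?_, fun i => ?_, fun j => ?_⟩
  · have := hπ.1 i j; have := hρ.1 i j
    have : (a • π + b • ρ) i j = a * π i j + b * ρ i j := rfl
    rw [this]
    positivity
  · have : ∀ j, (a • π + b • ρ) i j = a * π i j + b * ρ i j := fun _ => rfl
    calc ∑ j, (a • π + b • ρ) i j = ∑ j, (a * π i j + b * ρ i j) :=
        Finset.sum_congr rfl fun j _ => this j
      _ = a * (∑ j, π i j) + b * (∑ j, ρ i j) := by
          rw [Finset.sum_add_distrib, Finset.mul_sum, Finset.mul_sum]
      _ = μ i := by rw [hπ.2.1 i, hρ.2.1 i, ← add_mul, hab, one_mul]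
  · have : ∀ i, (a • π + b • ρ) i j = a * π i j + b * ρ i j := fun _ => rfl
    calc ∑ i, (a • π + b • ρ) i j = ∑ i, (a * π i j + b * ρ i j) :=
        Finset.sum_congr rfl fun i _ => this i
      _ = a * (∑ i, π i j) + b * (∑ i, ρ i j) := by
          rw [Finset.sum_add_distrib, Finset.mul_sum, Finset.mul_sum]
      _ = ν j := by rw [hπ.2.2 j, hρ.2.2 j, ← add_mul, hab, one_mul]

lemma DCouplings_isCompact {n : ℕ} {μ ν : Fin n → ℝ} (hμ : IsHistogram μ) :
    IsCompact (DCouplings μ ν) := by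
  have hclosed : IsClosed (DCouplings μ ν) := by
    have heq : DCouplings μ ν =
        (⋂ i, ⋂ j, {π : Fin n → Fin n → ℝ | 0 ≤ π i j}) ∩
        ((⋂ i, {π : Fin n → Fin n → ℝ | ∑ j, π i j = μ i}) ∩
         (⋂ j, {π : Fin n → Fin n → ℝ | ∑ i, π i j = ν j})) := by
      ext π
      simp only [DCouplings, Set.mem_setOf_eq, Set.mem_inter_iff, Set.mem_iInter]
    rw [heq]
    have hcont : ∀ i j : Fin n, Continuous fun π : Fin n → Fin n → ℝ => π i j :=
      fun i j => (continuous_apply j).comp (continuous_apply i)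
    refine IsClosed.inter ?_ (IsClosed.inter ?_ ?_)
    · exact isClosed_iInter fun i => isClosed_iInter fun j =>
        isClosed_le continuous_const (hcont i j)
    · exact isClosed_iInter fun i =>
        isClosed_eq (continuous_finset_sum _ fun j _ => hcont i j) continuous_const
    · exact isClosed_iInter fun j =>
        isClosed_eq (continuous_finset_sum _ fun i _ => hcont i j) continuous_const
  have hsub : DCouplings μ ν ⊆ Metric.closedBall 0 1 := by
    intro π hπ
    rw [Metric.mem_closedBall, dist_zero_right]
    refine (pi_norm_le_iff_of_nonneg zero_le_one).mpr fun i => ?_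
    refine (pi_norm_le_iff_of_nonneg zero_le_one).mpr fun j => ?_
    rw [Real.norm_eq_abs, abs_le]
    exact ⟨by linarith [hπ.1 i j], DCouplings_entry_le hμ hπ i j⟩
  exact (isCompact_closedBall 0 1).of_isClosed_subset hclosed hsub

end frobl
noncomputable def Gfun {n : ℕ} (c₀ : Fin n → Fin n → ℝ) (ε : ℝ) (R : Fin n → Fin n → ℝ → ℝ)
    (t : Fin n → Fin n → ℝ) : (Fin n → Fin n → ℝ) → ℝ :=
  fun π => frob c₀ π + ε * ∑ i, ∑ j, rhat (R i j) (-(c₀ i j) / ε) (t i j) (π i j)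


/-- Constraining the adversarial cost to be nonnegative amounts to
linearizing the (separable) regularizer at short range. -/
theorem stmt5 {n : ℕ} (μ ν : Fin n → ℝ) (hμ : IsHistogram μ) (hν : IsHistogram ν)
    (c₀ : Fin n → Fin n → ℝ) (ε : ℝ) (hε : 0 < ε)
    (R : Fin n → Fin n → ℝ → ℝ)
    (hconv : ∀ i j, ConvexOn ℝ Set.univ (R i j))
    (hdiff : ∀ i j, Differentiable ℝ (R i j))
    (t : Fin n → Fin n → ℝ)
    (hfin : ∀ i j, rconj (R i j) (-(c₀ i j) / ε) ≠ ⊤)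
    (ht : ∀ i j, HasDerivAt (fun y => (rconj (R i j) y).toReal) (t i j) (-(c₀ i j) / ε)) :
    (⨆ c : {c : Fin n → Fin n → ℝ // ∀ i j, 0 ≤ c i j},
        ((dOT c.1 μ ν : ℝ) : EReal)
          - (ε : EReal) * ∑ i, ∑ j, rconj (R i j) ((c.1 i j - c₀ i j) / ε))
      = ((⨅ π : DCouplings μ ν,
          (frob c₀ π.1 + ε * ∑ i, ∑ j, rhat (R i j) (-(c₀ i j) / ε) (t i j) (π.1 i j)) : ℝ) :
            EReal) ∧
    ∀ i j, Continuous (rhat (R i j) (-(c₀ i j) / ε) (t i j)) ∧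
      ConvexOn ℝ Set.univ (rhat (R i j) (-(c₀ i j) / ε) (t i j)) := by
  classical
  haveI hne : Nonempty (DCouplings μ ν) := ⟨⟨_, prod_mem_DCouplings hμ hν⟩⟩
  have hrhatc : ∀ i j, Continuous (rhat (R i j) (-(c₀ i j) / ε) (t i j)) :=
    fun i j => rhat_continuous (hconv i j) (hdiff i j) (hfin i j) (ht i j)
  refine ⟨?_, fun i j => ⟨hrhatc i j,
    rhat_convexOn (hconv i j) (hdiff i j) (hfin i j) (ht i j)⟩⟩
  -- the main duality
  show (⨆ c : {c : Fin n → Fin n → ℝ // ∀ i j, 0 ≤ c i j},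
        ((dOT c.1 μ ν : ℝ) : EReal)
          - (ε : EReal) * ∑ i, ∑ j, rconj (R i j) ((c.1 i j - c₀ i j) / ε))
      = ((⨅ π : DCouplings μ ν, Gfun c₀ ε R t π.1 : ℝ) : EReal)
  have hcontapply : ∀ i j : Fin n, Continuous fun π : Fin n → Fin n → ℝ => π i j :=
    fun i j => (continuous_apply j).comp (continuous_apply i)
  have hGcont : Continuous (Gfun c₀ ε R t) := by
    refine Continuous.add ?_ (continuous_const.mul ?_)
    · exact continuous_finset_sum _ fun i _ => continuous_finset_sum _ fun j _ =>
        continuous_const.mul (hcontapply i j)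
    · exact continuous_finset_sum _ fun i _ => continuous_finset_sum _ fun j _ =>
        (hrhatc i j).comp (hcontapply i j)
  -- minimizer of G on the couplings
  obtain ⟨πs, hπs, hmin⟩ := (DCouplings_isCompact (ν := ν) hμ).exists_isMinOn
    ⟨_, prod_mem_DCouplings hμ hν⟩ hGcont.continuousOn
  have hmin' : ∀ π ∈ DCouplings μ ν, Gfun c₀ ε R t πs ≤ Gfun c₀ ε R t π :=
    fun π hπ => isMinOn_iff.mp hmin π hπ
  -- the infimum equals G πs
  have hinf_eq : (⨅ π : DCouplings μ ν, Gfun c₀ ε R t π.1) = Gfun c₀ ε R t πs := by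
    refine le_antisymm (ciInf_le ⟨Gfun c₀ ε R t πs, ?_⟩ (⟨πs, hπs⟩ : DCouplings μ ν))
      (le_ciInf fun p => hmin' p.1 p.2)
    rintro x ⟨p, rfl⟩
    exact hmin' p.1 p.2
  rw [hinf_eq]
  -- the candidate optimal cost matrix
  set rp : Fin n → Fin n → ℝ := fun i j =>
    if t i j ≤ πs i j then deriv (R i j) (πs i j) else -(c₀ i j) / ε with hrp
  set cstar : Fin n → Fin n → ℝ := fun i j => c₀ i j + ε * rp i j with hcs
  have hcstar : ∀ i j, 0 ≤ cstar i j := by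
    intro i j
    have h1 : -(c₀ i j) / ε ≤ rp i j :=
      rprime_ge (hconv i j) (hdiff i j) (hfin i j) (ht i j) (πs i j)
    have h2 : ε * (-(c₀ i j) / ε) ≤ ε * rp i j :=
      mul_le_mul_of_nonneg_left h1 hε.le
    have h3 : ε * (-(c₀ i j) / ε) = -(c₀ i j) := by field_simp
    simp only [hcs]
    rw [h3] at h2
    linarith
  -- variational inequality: πs is optimal for cstar
  have hvar : ∀ π ∈ DCouplings μ ν, frob cstar πs ≤ frob cstar π := by
    intro π hπ
    set d : Fin n → Fin n → ℝ := fun i j => π i j - πs i j with hd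
    have hinner : ∀ i j : Fin n, HasDerivAt (fun s : ℝ => πs i j + s * d i j) (d i j) 0 := by
      intro i j
      simpa using ((hasDerivAt_id (0:ℝ)).mul_const (d i j)).const_add (πs i j)
    have hcomp : ∀ i j : Fin n, HasDerivAt
        (fun s : ℝ => rhat (R i j) (-(c₀ i j) / ε) (t i j) (πs i j + s * d i j))
        (rp i j * d i j) 0 := by
      intro i j
      have houter := rhat_hasDerivAt (hconv i j) (hdiff i j) (hfin i j) (ht i j) (πs i j)
      have h0 : πs i j + (0:ℝ) * d i j = πs i j := by ring
      have houter' : HasDerivAt (rhat (R i j) (-(c₀ i j) / ε) (t i j)) (rp i j)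
          (πs i j + (0:ℝ) * d i j) := by
        rw [h0]
        simp only [hrp]
        exact houter
      exact HasDerivAt.comp (0:ℝ) houter' (hinner i j)
    have hsum : HasDerivAt
        (fun s : ℝ => ∑ i, ∑ j, rhat (R i j) (-(c₀ i j) / ε) (t i j) (πs i j + s * d i j))
        (∑ i, ∑ j, rp i j * d i j) 0 :=
      HasDerivAt.fun_sum fun i _ => HasDerivAt.fun_sum fun j _ => hcomp i j
    have hφ : HasDerivAt (fun s : ℝ => Gfun c₀ ε R t (fun i j => πs i j + s * d i j))
        (frob c₀ d + ε * ∑ i, ∑ j, rp i j * d i j) 0 := by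
      have h1 : HasDerivAt (fun s : ℝ => frob c₀ πs + s * frob c₀ d) (frob c₀ d) 0 := by
        simpa using ((hasDerivAt_id (0:ℝ)).mul_const (frob c₀ d)).const_add (frob c₀ πs)
      have h2 := h1.add (hsum.const_mul ε)
      refine HasDerivAt.congr_of_eventuallyEq h2 (Filter.Eventually.of_forall fun s => ?_)
      show Gfun c₀ ε R t _ = _
      rw [Gfun, frob_line]; rfl
    have hmem : ∀ s ∈ Set.Icc (0:ℝ) 1,
        (fun i j => πs i j + s * d i j) ∈ DCouplings μ ν := by
      intro s hs
      have hconv' := DCouplings_convex μ ν hπs hπ (a := 1 - s) (b := s)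
        (by linarith [hs.2]) hs.1 (by ring)
      have heqf : (fun i j => πs i j + s * d i j) = (1 - s) • πs + s • π := by
        funext i j
        show πs i j + s * d i j = (1 - s) * πs i j + s * π i j
        simp only [hd]
        ring
      rw [heqf]
      exact hconv'
    have hG0 : Gfun c₀ ε R t (fun i j => πs i j + (0:ℝ) * d i j) = Gfun c₀ ε R t πs := by
      congr 1
      funext i j
      ring
    have hD : 0 ≤ frob c₀ d + ε * ∑ i, ∑ j, rp i j * d i j := by
      have htend := hasDerivAt_iff_tendsto_slope.mp hφ
      have htend' : Filter.Tendsto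
          (slope (fun s : ℝ => Gfun c₀ ε R t fun i j => πs i j + s * d i j) 0)
          (nhdsWithin 0 (Set.Ioi 0))
          (nhds (frob c₀ d + ε * ∑ i, ∑ j, rp i j * d i j)) :=
        htend.mono_left (nhdsWithin_mono 0 fun x hx => ne_of_gt hx)
      refine ge_of_tendsto htend' ?_
      filter_upwards [Ioc_mem_nhdsGT_of_mem (Set.mem_Ico.mpr ⟨le_refl (0:ℝ), zero_lt_one⟩)]
        with s hs
      rw [slope_def_field]
      show 0 ≤ (Gfun c₀ ε R t (fun i j => πs i j + s * d i j)
        - Gfun c₀ ε R t (fun i j => πs i j + (0:ℝ) * d i j)) / (s - 0)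
      rw [hG0]
      have hfeas := hmin' _ (hmem s ⟨hs.1.le, hs.2⟩)
      apply div_nonneg
      · linarith
      · linarith [hs.1]
    have hfd : frob cstar π - frob cstar πs
        = frob c₀ d + ε * ∑ i, ∑ j, rp i j * d i j := by
      rw [frob, frob, ← dsum_sub]
      have hentry : ∀ i j, cstar i j * π i j - cstar i j * πs i j
          = c₀ i j * d i j + ε * (rp i j * d i j) := by
        intro i j
        simp only [hcs, hd]
        ring
      rw [dsum_congr hentry, dsum_add, ← dsum_mul]
      rfl
    linarith
  -- dOT at the candidate cost
  have hdOT : dOT cstar μ ν = frob cstar πs := by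
    rw [dOT]
    refine le_antisymm (ciInf_le ⟨frob cstar πs, ?_⟩ (⟨πs, hπs⟩ : DCouplings μ ν))
      (le_ciInf fun p => hvar p.1 p.2)
    rintro x ⟨p, rfl⟩
    exact hvar p.1 p.2
  -- value of the supremand at cstar
  have hyc : ∀ i j, (cstar i j - c₀ i j) / ε = rp i j := by
    intro i j
    simp only [hcs]
    field_simp; ring
  have hterm : ∀ i j, rconj (R i j) ((cstar i j - c₀ i j) / ε)
      = ((πs i j * rp i j - rhat (R i j) (-(c₀ i j) / ε) (t i j) (πs i j) : ℝ) : EReal) := by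
    intro i j
    rw [hyc i j]
    simp only [hrp]
    exact rconj_rprime (hconv i j) (hdiff i j) (hfin i j) (ht i j) (πs i j)
  have hESUM : (∑ i, ∑ j, rconj (R i j) ((cstar i j - c₀ i j) / ε))
      = ((∑ i, ∑ j, (πs i j * rp i j
          - rhat (R i j) (-(c₀ i j) / ε) (t i j) (πs i j)) : ℝ) : EReal) := by
    rw [← esum_coe]
    refine Finset.sum_congr rfl fun i _ => ?_
    rw [← esum_coe]
    exact Finset.sum_congr rfl fun j _ => hterm i j
  have hval : ((dOT cstar μ ν : ℝ) : EReal)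
      - (ε : EReal) * ∑ i, ∑ j, rconj (R i j) ((cstar i j - c₀ i j) / ε)
      = ((Gfun c₀ ε R t πs : ℝ) : EReal) := by
    rw [hESUM, ← EReal.coe_mul, ← EReal.coe_sub]
    congr 1
    rw [hdOT]
    have hentry : ∀ i j, cstar i j * πs i j
        - ε * (πs i j * rp i j - rhat (R i j) (-(c₀ i j) / ε) (t i j) (πs i j))
        = c₀ i j * πs i j + ε * rhat (R i j) (-(c₀ i j) / ε) (t i j) (πs i j) := by
      intro i j
      simp only [hcs]
      ring
    calc frob cstar πs - ε * ∑ i, ∑ j, (πs i j * rp i j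
          - rhat (R i j) (-(c₀ i j) / ε) (t i j) (πs i j))
        = ∑ i, ∑ j, (cstar i j * πs i j
          - ε * (πs i j * rp i j - rhat (R i j) (-(c₀ i j) / ε) (t i j) (πs i j))) := by
          rw [frob, dsum_mul ε, ← dsum_sub]
      _ = ∑ i, ∑ j, (c₀ i j * πs i j
          + ε * rhat (R i j) (-(c₀ i j) / ε) (t i j) (πs i j)) := dsum_congr hentry
      _ = Gfun c₀ ε R t πs := by
          rw [dsum_add, ← dsum_mul, Gfun, frob]
  -- the ≥ direction
  have hges : ((Gfun c₀ ε R t πs : ℝ) : EReal)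
      ≤ ⨆ c : {c : Fin n → Fin n → ℝ // ∀ i j, 0 ≤ c i j},
        ((dOT c.1 μ ν : ℝ) : EReal)
          - (ε : EReal) * ∑ i, ∑ j, rconj (R i j) ((c.1 i j - c₀ i j) / ε) := by
    have hle := le_iSup (fun c : {c : Fin n → Fin n → ℝ // ∀ i j, 0 ≤ c i j} =>
      ((dOT c.1 μ ν : ℝ) : EReal)
        - (ε : EReal) * ∑ i, ∑ j, rconj (R i j) ((c.1 i j - c₀ i j) / ε))
      ⟨cstar, hcstar⟩
    dsimp only at hle
    rwa [hval] at hle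
  refine le_antisymm ?_ hges
  -- the ≤ direction (weak duality)
  refine iSup_le fun c => ?_
  by_cases hT : ∀ i j, rconj (R i j) ((c.1 i j - c₀ i j) / ε) ≠ ⊤
  · -- all conjugate values are finite
    set B : Fin n → Fin n → ℝ :=
      fun i j => (rconj (R i j) ((c.1 i j - c₀ i j) / ε)).toReal with hB
    have hBco : ∀ i j, ((B i j : ℝ) : EReal) = rconj (R i j) ((c.1 i j - c₀ i j) / ε) :=
      fun i j => EReal.coe_toReal (hT i j) (rconj_ne_bot _ _)
    have hESUM2 : (∑ i, ∑ j, rconj (R i j) ((c.1 i j - c₀ i j) / ε))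
        = ((∑ i, ∑ j, B i j : ℝ) : EReal) := by
      rw [← esum_coe]
      refine Finset.sum_congr rfl fun i _ => ?_
      rw [← esum_coe]
      exact Finset.sum_congr rfl fun j _ => (hBco i j).symm
    rw [hESUM2, ← EReal.coe_mul, ← EReal.coe_sub, EReal.coe_le_coe_iff]
    have hyge : ∀ i j, -(c₀ i j) / ε ≤ (c.1 i j - c₀ i j) / ε := by
      intro i j
      have := c.2 i j
      apply (div_le_div_iff_of_pos_right hε).mpr
      linarith
    have hwk : ∀ i j, πs i j * ((c.1 i j - c₀ i j) / ε)
        - rhat (R i j) (-(c₀ i j) / ε) (t i j) (πs i j) ≤ B i j := by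
      intro i j
      have h := weak_scalar (hconv i j) (hdiff i j) (hfin i j) (ht i j) (hyge i j) (πs i j)
      rw [← hBco i j, EReal.coe_le_coe_iff] at h
      exact h
    have hdle : dOT c.1 μ ν ≤ frob c.1 πs := by
      rw [dOT]
      refine ciInf_le ⟨0, ?_⟩ (⟨πs, hπs⟩ : DCouplings μ ν)
      rintro x ⟨p, rfl⟩
      exact frob_nonneg c.2 p.2.1
    have hfle : frob c.1 πs - ε * ∑ i, ∑ j, B i j ≤ Gfun c₀ ε R t πs := by
      have hentry : ∀ i j, c.1 i j * πs i j - ε * B i j ≤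
          c₀ i j * πs i j + ε * rhat (R i j) (-(c₀ i j) / ε) (t i j) (πs i j) := by
        intro i j
        have h2 := mul_le_mul_of_nonneg_left (hwk i j) hε.le
        rw [mul_sub] at h2
        have h4 : ε * (πs i j * ((c.1 i j - c₀ i j) / ε)) = πs i j * (c.1 i j - c₀ i j) := by
          field_simp
        rw [h4] at h2
        nlinarith [h2]
      calc frob c.1 πs - ε * ∑ i, ∑ j, B i j
          = ∑ i, ∑ j, (c.1 i j * πs i j - ε * B i j) := by
            rw [frob, dsum_mul ε, ← dsum_sub]
        _ ≤ ∑ i, ∑ j, (c₀ i j * πs i j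
            + ε * rhat (R i j) (-(c₀ i j) / ε) (t i j) (πs i j)) := dsum_le hentry
        _ = Gfun c₀ ε R t πs := by
            rw [dsum_add, ← dsum_mul, Gfun, frob]
    linarith
  · -- some conjugate value is ⊤ : the supremand is ⊥
    push_neg at hT
    obtain ⟨i0, j0, htop⟩ := hT
    have hinner_top : (∑ j, rconj (R i0 j) ((c.1 i0 j - c₀ i0 j) / ε)) = ⊤ :=
      esum_eq_top _ _ (Finset.mem_univ j0) htop (fun b _ => rconj_ne_bot _ _)
    have houter_top : (∑ i, ∑ j, rconj (R i j) ((c.1 i j - c₀ i j) / ε)) = ⊤ :=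
      esum_eq_top _ _ (Finset.mem_univ i0) hinner_top
        (fun b _ => esum_ne_bot _ _ fun j _ => rconj_ne_bot _ _)
    rw [houter_top, EReal.coe_mul_top_of_pos hε, EReal.sub_top]
    exact bot_le
end

section
/- With the hypotheses of the nonnegative-adversarial-cost proposition, if in addition each R_{ij} : ℝ → ℝ is continuously differentiable, then the linearized regularizer R̂_{ij} (equal to R_{ij}(x) for x ≥ t_{ij} = (R_{ij}*)'(−(c₀)_{ij}/ε) and to the affine function x ↦ (−(c₀)_{ij}/ε)·x − R_{ij}*(−(c₀)_{ij}/ε) for x < t_{ij}) is continuously differentiable on ℝ. -/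
open scoped BigOperators

/-- Subgradient inequality for a convex differentiable function. -/
lemma subgrad_aux_s6 {f : ℝ → ℝ} {d a : ℝ} (hconv : ConvexOn ℝ Set.univ f)
    (hd : HasDerivAt f d a) (x : ℝ) : f a + d * (x - a) ≤ f x := by
  rcases lt_trichotomy x a with h | h | h
  · have hs := hconv.slope_le_of_hasDerivAt (Set.mem_univ x) (Set.mem_univ a) h hd
    rw [slope_def_field] at hs
    have hxa : (0:ℝ) < a - x := by linarith
    have := (div_le_iff₀ hxa).mp hs
    nlinarith
  · simp [h]
  · have hs := hconv.le_slope_of_hasDerivAt (Set.mem_univ a) (Set.mem_univ x) h hd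
    rw [slope_def_field] at hs
    have hxa : (0:ℝ) < x - a := by linarith
    have := (le_div_iff₀ hxa).mp hs
    linarith

lemma rconj_term_le {f : ℝ → ℝ} {y M : ℝ} (hM : rconj f y = (M : EReal)) (x : ℝ) :
    x * y - f x ≤ M := by
  have hle : ((x * y - f x : ℝ) : EReal) ≤ rconj f y :=
    le_iSup (fun x : ℝ => ((x * y - f x : ℝ) : EReal)) x
  rw [hM] at hle
  exact_mod_cast hle

/-- Main scalar lemma. -/
lemma rhat_contDiff {f : ℝ → ℝ} {y₀ t₀ : ℝ} (hconv : ConvexOn ℝ Set.univ f)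
    (hC1 : ContDiff ℝ 1 f) (hfin : rconj f y₀ ≠ ⊤)
    (ht : HasDerivAt (fun y => (rconj f y).toReal) t₀ y₀) :
    ContDiff ℝ 1 (rhat f y₀ t₀) := by
  have hdf : Differentiable ℝ f := hC1.differentiable one_ne_zero
  set r : ℝ := (rconj f y₀).toReal with hr
  have hreq : rconj f y₀ = (r : EReal) := (EReal.coe_toReal hfin (rconj_ne_bot f y₀)).symm
  have hA : ∀ x, x * y₀ - f x ≤ r := rconj_term_le hreq
  set σ : ℝ := deriv f t₀ - y₀ with hσ
  -- upper bound for the conjugate at `y₀ + σ`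
  have hsub : ∀ x, f t₀ + deriv f t₀ * (x - t₀) ≤ f x :=
    subgrad_aux_s6 hconv (hdf t₀).hasDerivAt
  have hupper : rconj f (y₀ + σ) ≤ (((y₀ + σ) * t₀ - f t₀ : ℝ) : EReal) := by
    refine iSup_le fun x => ?_
    rw [EReal.coe_le_coe_iff]
    have hσd : y₀ + σ = deriv f t₀ := by rw [hσ]; ring
    rw [hσd]
    nlinarith [hsub x]
  have hnetop : rconj f (y₀ + σ) ≠ ⊤ :=
    ne_top_of_le_ne_top (EReal.coe_ne_top _) hupper
  set M : ℝ := (rconj f (y₀ + σ)).toReal with hM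
  have hMeq : rconj f (y₀ + σ) = (M : EReal) :=
    (EReal.coe_toReal hnetop (rconj_ne_bot f _)).symm
  have hMA : M ≤ (y₀ + σ) * t₀ - f t₀ := by
    have := EReal.toReal_le_toReal hupper (rconj_ne_bot f _) (EReal.coe_ne_top _)
    rw [EReal.toReal_coe] at this; simpa [← hM] using this
  have hterm : ∀ x, x * (y₀ + σ) - f x ≤ M := rconj_term_le hMeq
  -- segment bound
  have hseg : ∀ l : ℝ, l ∈ Set.Ioc (0:ℝ) 1 →
      (rconj f (y₀ + l * σ)).toReal ≤ r + l * (M - r) := by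
    intro l hl
    have hub : rconj f (y₀ + l * σ) ≤ ((r + l * (M - r) : ℝ) : EReal) := by
      refine iSup_le fun x => ?_
      rw [EReal.coe_le_coe_iff]
      have h1 := hterm x
      have h2 := hA x
      nlinarith [mul_le_mul_of_nonneg_left h1 (le_of_lt hl.1),
        mul_le_mul_of_nonneg_left h2 (by linarith [hl.2] : (0:ℝ) ≤ 1 - l)]
    have := EReal.toReal_le_toReal hub (rconj_ne_bot f _) (EReal.coe_ne_top _)
    rw [EReal.toReal_coe] at this; simpa using this
  -- derivative along the segment
  have hinner : HasDerivAt (fun l : ℝ => y₀ + l * σ) σ 0 := by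
    simpa using ((hasDerivAt_id (0:ℝ)).mul_const σ).const_add y₀
  have ht' : HasDerivAt (fun y => (rconj f y).toReal) t₀ (y₀ + 0 * σ) := by
    simpa using ht
  have hF : HasDerivAt (fun l : ℝ => (rconj f (y₀ + l * σ)).toReal) (t₀ * σ) 0 :=
    by have := HasDerivAt.comp (0:ℝ) ht' hinner; exact this
  have hF0 : (rconj f (y₀ + 0 * σ)).toReal = r := by simp [hr]
  have hslope : t₀ * σ ≤ M - r := by
    have htend :
        Filter.Tendsto (slope (fun l : ℝ => (rconj f (y₀ + l * σ)).toReal) 0)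
          (nhdsWithin 0 (Set.Ioi 0)) (nhds (t₀ * σ)) := by
      refine (hasDerivAt_iff_tendsto_slope.mp hF).mono_left
        (nhdsWithin_mono _ ?_)
      intro x hx
      exact ne_of_gt hx
    refine le_of_tendsto htend ?_
    filter_upwards [Ioc_mem_nhdsGT_of_mem (by constructor <;> norm_num :
      (0:ℝ) ∈ Set.Ico (0:ℝ) 1)] with l hl
    rw [slope_def_field, hF0]
    rw [div_le_iff₀ (by simpa using hl.1 : (0:ℝ) < l - 0)]
    have := hseg l hl
    nlinarith
  -- value identity
  have hval : f t₀ = y₀ * t₀ - r := by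
    have h1 := hA t₀
    have h2 : r + t₀ * σ ≤ (y₀ + σ) * t₀ - f t₀ := by linarith
    nlinarith
  -- derivative identity
  have hdval : deriv f t₀ = y₀ := by
    have hmin : ∀ x, f t₀ - y₀ * t₀ ≤ f x - y₀ * x := by
      intro x
      have := hA x
      nlinarith [hval]
    have hd : HasDerivAt (fun x => f x - y₀ * x) (deriv f t₀ - y₀) t₀ :=
      (hdf t₀).hasDerivAt.sub (by simpa using (hasDerivAt_id t₀).const_mul y₀)
    have hloc : IsLocalMin (fun x => f x - y₀ * x) t₀ :=
      Filter.Eventually.of_forall hmin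
    have := hloc.hasDerivAt_eq_zero hd
    linarith
  -- the piecewise derivative
  set D : ℝ → ℝ := fun x => if t₀ ≤ x then deriv f x else y₀ with hD
  have hI : ∀ x, HasDerivAt (rhat f y₀ t₀) (D x) x := by
    intro x
    rcases lt_trichotomy x t₀ with h | h | h
    · have hDx : D x = y₀ := if_neg (not_le.mpr h)
      rw [hDx]
      have haff : HasDerivAt (fun z : ℝ => y₀ * z - r) y₀ x := by
        simpa using ((hasDerivAt_id x).const_mul y₀).sub_const r
      refine haff.congr_of_eventuallyEq ?_
      filter_upwards [Iio_mem_nhds h] with z hz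
      simp only [rhat, if_neg (not_le.mpr (Set.mem_Iio.mp hz)), hr]
    · subst h
      have hDx : D x = y₀ := by rw [hD]; simp [hdval]
      rw [hDx]
      rw [hasDerivAt_iff_isLittleO]
      have hf0 : (fun z => f z - f x - (z - x) • y₀) =o[nhds x] fun z => z - x := by
        have := hasDerivAt_iff_isLittleO.mp (hdval ▸ (hdf x).hasDerivAt)
        simpa using this
      refine (Asymptotics.isBigO_of_le _ ?_).trans_isLittleO hf0
      intro z
      simp only [Real.norm_eq_abs, smul_eq_mul]
      have hrx : rhat f y₀ x x = f x := by simp [rhat]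
      rcases le_or_gt x z with hz | hz
      · have : rhat f y₀ x z = f z := by simp [rhat, hz]
        rw [this, hrx]
      · have h1 : rhat f y₀ x z = y₀ * z - r := by
          simp [rhat, not_le.mpr hz, hr]
        rw [h1, hrx]
        have : y₀ * z - r - f x - (z - x) * y₀ = 0 := by rw [hval]; ring
        rw [this]
        simp [abs_nonneg]
    · have hDx : D x = deriv f x := if_pos (le_of_lt h)
      rw [hDx]
      refine (hdf x).hasDerivAt.congr_of_eventuallyEq ?_
      filter_upwards [Ioi_mem_nhds h] with z hz
      simp [rhat, le_of_lt (Set.mem_Ioi.mp hz)]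
  have hDcont : Continuous D := by
    refine Continuous.if_le (contDiff_one_iff_deriv.mp hC1).2 continuous_const
      continuous_const continuous_id fun x hx => ?_
    rw [← hx]
    exact hdval
  refine contDiff_one_iff_deriv.mpr ⟨fun x => (hI x).differentiableAt, ?_⟩
  have : deriv (rhat f y₀ t₀) = D := funext fun x => (hI x).deriv
  rw [this]
  exact hDcont

/-- If moreover each `R_{ij}` is continuously differentiable, then the
linearized regularizer `R̂_{ij}` is continuously differentiable on `ℝ`. -/
theorem stmt6 {n : ℕ} (c₀ : Fin n → Fin n → ℝ) (ε : ℝ) (hε : 0 < ε)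
    (R : Fin n → Fin n → ℝ → ℝ)
    (hconv : ∀ i j, ConvexOn ℝ Set.univ (R i j))
    (hC1 : ∀ i j, ContDiff ℝ 1 (R i j))
    (t : Fin n → Fin n → ℝ)
    (hfin : ∀ i j, rconj (R i j) (-(c₀ i j) / ε) ≠ ⊤)
    (ht : ∀ i j, HasDerivAt (fun y => (rconj (R i j) y).toReal) (t i j) (-(c₀ i j) / ε)) :
    ∀ i j, ContDiff ℝ 1 (rhat (R i j) (-(c₀ i j) / ε) (t i j)) := by
  intro i j
  exact rhat_contDiff (hconv i j) (hC1 i j) (hfin i j) (ht i j)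
end

section
/- (p-th power weighted p-norm regularization is ground-cost adversarial.) Let n ∈ ℕ, μ, ν ∈ ℝⁿ histograms, c₀ ∈ ℝ^{n×n}, ε > 0, p ∈ (1,∞) with conjugate exponent q (1/p + 1/q = 1), and w ∈ ℝ^{n×n} with strictly positive entries. Then min_{π∈Π(μ,ν)} [ ⟨c₀,π⟩ + (ε/p) Σ_{ij} w_{ij} |π_{ij}|^p ] = sup_{c ∈ ℝ^{n×n}} [ OT_c(μ,ν) − (ε/q) Σ_{ij} w_{ij}^{−(q−1)} |(c_{ij} − (c₀)_{ij})/ε|^q ]. -/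
open scoped BigOperators

open scoped Topology in
private lemma stmt9_deriv_nonneg_of_min (G : ℝ → ℝ) (m : ℝ) (hG : HasDerivAt G m 0)
    (hmin : ∀ t ∈ Set.Icc (0:ℝ) 1, G 0 ≤ G t) : 0 ≤ m := by
  have hd : HasDerivWithinAt G m (Set.Ioc (0:ℝ) 1) 0 := hG.hasDerivWithinAt
  rw [hasDerivWithinAt_iff_tendsto_slope] at hd
  have h0 : (0:ℝ) ∉ Set.Ioc (0:ℝ) 1 := by simp
  rw [Set.diff_singleton_eq_self h0] at hd
  have hne : (𝓝[Set.Ioc (0:ℝ) 1] (0:ℝ)).NeBot := by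
    rw [nhdsWithin_Ioc_eq_nhdsGT (zero_lt_one)]
    infer_instance
  refine ge_of_tendsto hd ?_
  filter_upwards [self_mem_nhdsWithin] with t ht
  rw [slope_def_field]
  have h1 : G 0 ≤ G t := hmin t ⟨ht.1.le, ht.2⟩
  have h2 : (0:ℝ) < t - 0 := by simpa using ht.1
  exact div_nonneg (by linarith) h2.le

private lemma stmt9_young_scaled {p q : ℝ} (hpq : Real.HolderConjugate p q) {s a b : ℝ}
    (hs : 0 < s) (ha : 0 ≤ a) (hb : 0 ≤ b) :
    a * b ≤ s * a ^ p / p + s ^ (-(q-1)) * b ^ q / q := by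
  have hsp : (0:ℝ) < s ^ (1/p) := Real.rpow_pos_of_pos hs _
  have h := Real.young_inequality_of_nonneg
    (mul_nonneg hsp.le ha) (mul_nonneg (inv_nonneg.2 hsp.le) hb) hpq
  have hxy : (s ^ (1/p) * a) * ((s ^ (1/p))⁻¹ * b) = a * b := by
    field_simp
  have hx : (s ^ (1/p) * a) ^ p = s * a ^ p := by
    rw [Real.mul_rpow hsp.le ha, ← Real.rpow_mul hs.le,
      one_div_mul_cancel hpq.ne_zero, Real.rpow_one]
  have hy : ((s ^ (1/p))⁻¹ * b) ^ q = s ^ (-(q-1)) * b ^ q := by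
    rw [Real.mul_rpow (inv_nonneg.2 hsp.le) hb, ← Real.rpow_neg hs.le,
      ← Real.rpow_mul hs.le, show -(1/p) * q = -(q-1) by
        rw [← hpq.symm.div_conj_eq_sub_one]; ring]
  rw [hxy, hx, hy] at h
  exact h

private lemma stmt9_dcoup_le_one {n : ℕ} {μ ν : Fin n → ℝ} (hμ1 : ∑ i, μ i = 1)
    (hμ0 : ∀ i, 0 ≤ μ i)
    {π : Fin n → Fin n → ℝ} (hπ : π ∈ DCouplings μ ν) (i j : Fin n) : π i j ≤ 1 := by
  obtain ⟨h0, hr, _⟩ := hπ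
  calc π i j ≤ ∑ j', π i j' :=
        Finset.single_le_sum (fun j' _ => h0 i j') (Finset.mem_univ j)
    _ = μ i := hr i
    _ ≤ ∑ i', μ i' := Finset.single_le_sum (fun i' _ => hμ0 i') (Finset.mem_univ i)
    _ = 1 := hμ1

private lemma stmt9_dcoup_compact {n : ℕ} (μ ν : Fin n → ℝ) (hμ0 : ∀ i, 0 ≤ μ i)
    (hμ1 : ∑ i, μ i = 1) : IsCompact (DCouplings μ ν) := by
  have hclosed : IsClosed (DCouplings μ ν) := by
    have : DCouplings μ ν = (⋂ i, ⋂ j, {π : Fin n → Fin n → ℝ | 0 ≤ π i j}) ∩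
        ((⋂ i, {π : Fin n → Fin n → ℝ | ∑ j, π i j = μ i}) ∩
         (⋂ j, {π : Fin n → Fin n → ℝ | ∑ i, π i j = ν j})) := by
      ext π
      simp [DCouplings, Set.mem_iInter, forall_and]
    rw [this]
    have hc : ∀ i j : Fin n, Continuous fun π : Fin n → Fin n → ℝ => π i j :=
      fun i j => (continuous_apply j).comp (continuous_apply i)
    refine IsClosed.inter ?_ (IsClosed.inter ?_ ?_)
    · exact isClosed_iInter fun i => isClosed_iInter fun j =>
        isClosed_le continuous_const (hc i j)
    · exact isClosed_iInter fun i =>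
        isClosed_eq (continuous_finset_sum _ fun j _ => hc i j) continuous_const
    · exact isClosed_iInter fun j =>
        isClosed_eq (continuous_finset_sum _ fun i _ => hc i j) continuous_const
  refine IsCompact.of_isClosed_subset (isCompact_Icc (a := fun _ _ => (0:ℝ))
    (b := fun _ _ => (1:ℝ))) hclosed ?_
  intro π hπ
  exact ⟨fun i j => hπ.1 i j, fun i j => stmt9_dcoup_le_one hμ1 hμ0 hπ i j⟩

set_option maxHeartbeats 2000000 in
/-- (Weighted `p`-th power `p`-norm regularization is ground cost
adversarial.) -/
theorem stmt9 {n : ℕ} (μ ν : Fin n → ℝ) (hμ : IsHistogram μ) (hν : IsHistogram ν)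
    (c₀ : Fin n → Fin n → ℝ) (ε : ℝ) (hε : 0 < ε)
    (p q : ℝ) (hp : 1 < p) (hpq : 1 / p + 1 / q = 1)
    (w : Fin n → Fin n → ℝ) (hw : ∀ i j, 0 < w i j) :
    (⨅ π : DCouplings μ ν,
        (frob c₀ π.1 + ε / p * ∑ i, ∑ j, w i j * |π.1 i j| ^ p))
      = ⨆ c : Fin n → Fin n → ℝ,
          (dOT c μ ν -
            ε / q * ∑ i, ∑ j, w i j ^ (-(q - 1)) * |(c i j - c₀ i j) / ε| ^ q) := by
  classical
  obtain ⟨hμ0, hμ1⟩ := hμ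
  obtain ⟨hν0, hν1⟩ := hν
  have hq : Real.HolderConjugate p q := Real.holderConjugate_iff.2 ⟨hp, by simpa [one_div] using hpq⟩
  have hp0 : (0:ℝ) < p := hq.pos
  have hq0 : (0:ℝ) < q := hq.symm.pos
  -- the coupling polytope
  have hSne : (DCouplings μ ν).Nonempty := by
    refine ⟨fun i j => μ i * ν j, fun i j => mul_nonneg (hμ0 i) (hν0 j),
      fun i => ?_, fun j => ?_⟩
    · rw [← Finset.mul_sum, hν1, mul_one]
    · rw [← Finset.sum_mul, hμ1, one_mul]
  have hScomp : IsCompact (DCouplings μ ν) := stmt9_dcoup_compact μ ν hμ0 hμ1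
  haveI : Nonempty ↥(DCouplings μ ν) := hSne.to_subtype
  have hc : ∀ i j : Fin n, Continuous fun π : Fin n → Fin n → ℝ => π i j :=
    fun i j => (continuous_apply j).comp (continuous_apply i)
  have hfrobc : ∀ c : Fin n → Fin n → ℝ, Continuous fun π => frob c π := by
    intro c
    unfold frob
    exact continuous_finset_sum _ fun i _ => continuous_finset_sum _ fun j _ =>
      continuous_const.mul (hc i j)
  -- the regularized objective
  set F : (Fin n → Fin n → ℝ) → ℝ :=
    fun ρ => frob c₀ ρ + ε / p * ∑ i, ∑ j, w i j * |ρ i j| ^ p with hFdef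
  have hFcont : Continuous F := by
    refine (hfrobc c₀).add (continuous_const.mul ?_)
    exact continuous_finset_sum _ fun i _ => continuous_finset_sum _ fun j _ =>
      continuous_const.mul ((Real.continuous_rpow_const hp0.le).comp (hc i j).abs)
  obtain ⟨πs, hπs, hminOn⟩ := hScomp.exists_isMinOn hSne hFcont.continuousOn
  have hmin : ∀ ρ ∈ DCouplings μ ν, F πs ≤ F ρ := fun ρ hρ => hminOn hρ
  -- remove absolute values on couplings
  have habs : ∀ (ρ : Fin n → Fin n → ℝ), (∀ i j, 0 ≤ ρ i j) →
      (∑ i, ∑ j, w i j * |ρ i j| ^ p) = ∑ i, ∑ j, w i j * ρ i j ^ p :=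
    fun ρ h => Finset.sum_congr rfl fun i _ => Finset.sum_congr rfl fun j _ => by
      rw [abs_of_nonneg (h i j)]
  -- the adversarial cost
  set cs : Fin n → Fin n → ℝ :=
    fun i j => c₀ i j + ε * w i j * πs i j ^ (p - 1) with hcsdef
  -- variational inequality: πs is optimal for the linear cost cs
  have hvar : ∀ ρ ∈ DCouplings μ ν, frob cs πs ≤ frob cs ρ := by
    intro ρ hρ
    set d : Fin n → Fin n → ℝ := fun i j => ρ i j - πs i j with hddef
    set G : ℝ → ℝ := fun t => (∑ i, ∑ j, c₀ i j * (πs i j + t * d i j))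
      + ε / p * ∑ i, ∑ j, w i j * (πs i j + t * d i j) ^ p with hGdef
    have hderiv : HasDerivAt G ((∑ i, ∑ j, c₀ i j * d i j)
        + ε / p * ∑ i, ∑ j, w i j * (p * πs i j ^ (p - 1) * d i j)) 0 := by
      apply HasDerivAt.add
      · apply HasDerivAt.fun_sum
        intro i _
        apply HasDerivAt.fun_sum
        intro j _
        exact ((hasDerivAt_mul_const (d i j)).const_add (πs i j)).const_mul (c₀ i j)
      · apply HasDerivAt.const_mul
        apply HasDerivAt.fun_sum
        intro i _
        apply HasDerivAt.fun_sum
        intro j _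
        apply HasDerivAt.const_mul
        have h1 : HasDerivAt (fun t : ℝ => πs i j + t * d i j) (d i j) 0 :=
          (hasDerivAt_mul_const (d i j)).const_add (πs i j)
        have h2 : HasDerivAt (fun x : ℝ => x ^ p) (p * πs i j ^ (p - 1))
            (πs i j + 0 * d i j) := by
          simpa using Real.hasDerivAt_rpow_const (p := p) (x := πs i j) (Or.inr hp.le)
        simpa [Function.comp_def] using h2.comp 0 h1
    have hmem : ∀ t ∈ Set.Icc (0:ℝ) 1,
        (fun i j => πs i j + t * d i j) ∈ DCouplings μ ν := by
      intro t ht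
      refine ⟨fun i j => ?_, fun i => ?_, fun j => ?_⟩
      · show 0 ≤ πs i j + t * d i j
        have heq : πs i j + t * d i j = (1 - t) * πs i j + t * ρ i j := by
          simp [hddef]; ring
        rw [heq]
        have := hπs.1 i j
        have := hρ.1 i j
        nlinarith [ht.1, ht.2]
      · simp only [hddef]
        rw [Finset.sum_add_distrib, hπs.2.1 i, ← Finset.mul_sum,
          Finset.sum_sub_distrib, hρ.2.1 i, hπs.2.1 i]
        ring
      · simp only [hddef]
        rw [Finset.sum_add_distrib, hπs.2.2 j, ← Finset.mul_sum,
          Finset.sum_sub_distrib, hρ.2.2 j, hπs.2.2 j]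
        ring
    have hGF : ∀ t ∈ Set.Icc (0:ℝ) 1, G t = F (fun i j => πs i j + t * d i j) := by
      intro t ht
      simp only [hGdef, hFdef, frob]
      rw [habs _ (fun i j => (hmem t ht).1 i j)]
    have hG0 : G 0 = F πs := by
      have := hGF 0 (by norm_num)
      simpa using this
    have hmono : ∀ t ∈ Set.Icc (0:ℝ) 1, G 0 ≤ G t := by
      intro t ht
      rw [hG0, hGF t ht]
      exact hmin _ (hmem t ht)
    have h0m := stmt9_deriv_nonneg_of_min G _ hderiv hmono
    have hm : (∑ i, ∑ j, c₀ i j * d i j)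
        + ε / p * ∑ i, ∑ j, w i j * (p * πs i j ^ (p - 1) * d i j)
        = frob cs ρ - frob cs πs := by
      simp only [frob, hcsdef, hddef]
      rw [Finset.mul_sum, ← Finset.sum_add_distrib, ← Finset.sum_sub_distrib]
      refine Finset.sum_congr rfl fun i _ => ?_
      rw [Finset.mul_sum, ← Finset.sum_add_distrib, ← Finset.sum_sub_distrib]
      refine Finset.sum_congr rfl fun j _ => ?_
      field_simp
    rw [hm] at h0m
    linarith
  -- boundedness of the transport cost over the polytope
  have hbdd : ∀ c : Fin n → Fin n → ℝ,
      BddBelow (Set.range fun π : DCouplings μ ν => frob c π.1) := by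
    intro c
    have := (hScomp.image (hfrobc c)).bddBelow
    rwa [Set.image_eq_range] at this
  have hOTle : ∀ c : Fin n → Fin n → ℝ, dOT c μ ν ≤ frob c πs :=
    fun c => ciInf_le (hbdd c) ⟨πs, hπs⟩
  have hOT : dOT cs μ ν = frob cs πs :=
    le_antisymm (hOTle cs) (le_ciInf fun ρ => hvar ρ.1 ρ.2)
  -- the regularization penalty
  set R : (Fin n → Fin n → ℝ) → ℝ :=
    fun c => ε / q * ∑ i, ∑ j, w i j ^ (-(q - 1)) * |(c i j - c₀ i j) / ε| ^ q with hRdef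
  -- splitting of frob
  have hsplit : ∀ c : Fin n → Fin n → ℝ,
      frob c πs = frob c₀ πs + ∑ i, ∑ j, (c i j - c₀ i j) * πs i j := by
    intro c
    simp only [frob]
    rw [← Finset.sum_add_distrib]
    refine Finset.sum_congr rfl fun i _ => ?_
    rw [← Finset.sum_add_distrib]
    exact Finset.sum_congr rfl fun j _ => by ring
  -- R-term normalization
  have hRterm : ∀ (i j : Fin n) (b : ℝ),
      (ε * w i j) ^ (-(q-1)) * |b| ^ q / q = ε / q * (w i j ^ (-(q-1)) * |b / ε| ^ q) := by
    intro i j b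
    have h1 : |b/ε| = |b|/ε := by rw [abs_div, abs_of_pos hε]
    have h2 : (|b|/ε) ^ q = |b| ^ q / ε ^ q := Real.div_rpow (abs_nonneg b) hε.le q
    have h3 : (ε * w i j) ^ (-(q-1)) = ε ^ (-(q-1)) * w i j ^ (-(q-1)) :=
      Real.mul_rpow hε.le (hw i j).le
    have h4 : ε ^ (-(q-1)) * ε ^ q = ε := by rw [← Real.rpow_add hε]; norm_num
    have hεq : (0:ℝ) < ε ^ q := Real.rpow_pos_of_pos hε q
    rw [h1, h2, h3, show ε ^ (-(q-1)) = ε / ε ^ q from by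
      rw [eq_div_iff hεq.ne']; exact h4]
    ring
  -- weak duality
  have hweak : ∀ c : Fin n → Fin n → ℝ, dOT c μ ν - R c ≤ F πs := by
    intro c
    have hsum : ∑ i, ∑ j, (c i j - c₀ i j) * πs i j
        ≤ (ε / p * ∑ i, ∑ j, w i j * |πs i j| ^ p) + R c := by
      simp only [hRdef]
      rw [Finset.mul_sum, Finset.mul_sum, ← Finset.sum_add_distrib]
      refine Finset.sum_le_sum fun i _ => ?_
      rw [Finset.mul_sum, Finset.mul_sum, ← Finset.sum_add_distrib]
      refine Finset.sum_le_sum fun j _ => ?_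
      have ha := hπs.1 i j
      have h1 : (c i j - c₀ i j) * πs i j ≤ πs i j * |c i j - c₀ i j| := by
        rw [mul_comm]
        exact mul_le_mul_of_nonneg_left (le_abs_self _) ha
      have h2 := stmt9_young_scaled hq (mul_pos hε (hw i j)) ha (abs_nonneg (c i j - c₀ i j))
      rw [hRterm i j (c i j - c₀ i j)] at h2
      calc (c i j - c₀ i j) * πs i j ≤ πs i j * |c i j - c₀ i j| := h1
        _ ≤ ε * w i j * πs i j ^ p / p
            + ε / q * (w i j ^ (-(q-1)) * |(c i j - c₀ i j) / ε| ^ q) := h2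
        _ = ε / p * (w i j * |πs i j| ^ p)
            + ε / q * (w i j ^ (-(q-1)) * |(c i j - c₀ i j) / ε| ^ q) := by
            rw [abs_of_nonneg ha]; ring
    have := hOTle c
    have h3 : frob c πs ≤ F πs + R c := by
      rw [hsplit c, hFdef]
      dsimp only
      linarith
    linarith
  -- value at cs: Young equality
  have hkey : frob cs πs - R cs = F πs := by
    have hent : ∀ i j : Fin n,
        (cs i j - c₀ i j) * πs i j
          = ε / p * (w i j * |πs i j| ^ p)
            + ε / q * (w i j ^ (-(q - 1)) * |(cs i j - c₀ i j) / ε| ^ q) := by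
      intro i j
      have ha := hπs.1 i j
      set a := πs i j with hadef
      have hcc : cs i j - c₀ i j = ε * w i j * a ^ (p-1) := by
        simp [hcsdef, hadef]
      rw [hcc, abs_of_nonneg ha]
      have hX : (0:ℝ) ≤ a ^ (p-1) := Real.rpow_nonneg ha _
      have h1 : (ε * w i j * a ^ (p-1)) / ε = w i j * a ^ (p-1) := by
        field_simp
      have h2 : |w i j * a ^ (p-1)| = w i j * a ^ (p-1) :=
        abs_of_nonneg (mul_nonneg (hw i j).le hX)
      have h3 : (w i j * a ^ (p-1)) ^ q = w i j ^ q * a ^ p := by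
        rw [Real.mul_rpow (hw i j).le hX, ← Real.rpow_mul ha, hq.sub_one_mul_conj]
      have h4 : w i j ^ (-(q-1)) * w i j ^ q = w i j := by
        rw [← Real.rpow_add (hw i j)]; norm_num
      have h5 : a ^ (p-1) * a = a ^ p := by
        rcases eq_or_lt_of_le ha with h|h
        · rw [← h, Real.zero_rpow (by positivity : p ≠ 0),
            Real.zero_rpow (sub_ne_zero.mpr (ne_of_gt hp)), zero_mul]
        · conv_rhs => rw [show p = (p-1) + 1 by ring]
          rw [Real.rpow_add h, Real.rpow_one]
      have hpq' : ε / p + ε / q = ε := by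
        rw [div_eq_mul_inv, div_eq_mul_inv, ← mul_add, hq.inv_add_inv_eq_one, mul_one]
      rw [h1, h2, h3]
      linear_combination (ε * w i j) * h5 - (ε / q * a ^ p) * h4
        - (w i j * a ^ p) * hpq'
    have : ∑ i, ∑ j, (cs i j - c₀ i j) * πs i j
        = (ε / p * ∑ i, ∑ j, w i j * |πs i j| ^ p) + R cs := by
      simp only [hRdef]
      rw [Finset.mul_sum, Finset.mul_sum, ← Finset.sum_add_distrib]
      refine Finset.sum_congr rfl fun i _ => ?_
      rw [Finset.mul_sum, Finset.mul_sum, ← Finset.sum_add_distrib]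
      refine Finset.sum_congr rfl fun j _ => ?_
      rw [hent i j]
    rw [hsplit cs, this, hFdef]
    ring
  -- conclude
  have hInf : (⨅ π : DCouplings μ ν,
      (frob c₀ π.1 + ε / p * ∑ i, ∑ j, w i j * |π.1 i j| ^ p)) = F πs := by
    refine le_antisymm (ciInf_le ?_ (⟨πs, hπs⟩ : DCouplings μ ν)) (le_ciInf fun ρ => hmin ρ.1 ρ.2)
    refine ⟨F πs, ?_⟩
    rintro x ⟨ρ, rfl⟩
    exact hmin ρ.1 ρ.2
  have hSup : (⨆ c : Fin n → Fin n → ℝ,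
      (dOT c μ ν - ε / q * ∑ i, ∑ j, w i j ^ (-(q - 1)) * |(c i j - c₀ i j) / ε| ^ q))
      = F πs := by
    refine le_antisymm (ciSup_le fun c => hweak c) ?_
    have hub : BddAbove (Set.range fun c : Fin n → Fin n → ℝ =>
        dOT c μ ν - ε / q * ∑ i, ∑ j, w i j ^ (-(q - 1)) * |(c i j - c₀ i j) / ε| ^ q) := by
      refine ⟨F πs, ?_⟩
      rintro x ⟨c, rfl⟩
      exact hweak c
    have h := le_ciSup hub cs
    have heq : dOT cs μ ν
        - ε / q * ∑ i, ∑ j, w i j ^ (-(q - 1)) * |(cs i j - c₀ i j) / ε| ^ q = F πs := by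
      rw [hOT]
      exact hkey
    rw [heq] at h
    exact h
  rw [hInf, hSup]
end

section
/- (Entropy-regularized OT is separably *-increasing.) Let X be a compact metric space, μ, ν Borel probability measures on X, c₀ ∈ C(X×X,ℝ), ε > 0. Define F on finite nonnegative Borel measures π on X×X by F(π) = ∫ c₀ dπ + ε ( ∫ log(dπ/d(μ⊗ν)) dπ − π(X×X) + 1 ) if π ≪ μ⊗ν, and F(π) = +∞ otherwise. Then for every c ∈ C(X×X,ℝ), F*(c) = ε ∫ ( exp((c − c₀)/ε) − 1 ) d(μ⊗ν); consequently, for all φ, ψ ∈ C(X,ℝ) and c ∈ C(X×X,ℝ) with φ(x)+ψ(y) ≤ c(x,y) for all x,y, one has F*(φ⊕ψ) ≤ F*(c), where (φ⊕ψ)(x,y) = φ(x)+ψ(y). -/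
open MeasureTheory Classical

/-- The entropy-regularized OT objective
`F(π) = ∫ c₀ dπ + ε (∫ log(dπ/dρ) dπ − π(X×X) + 1)` for `π ≪ ρ`, `+∞` otherwise. -/
noncomputable def entF {X : Type*} [MeasurableSpace X] [TopologicalSpace X]
    (c₀ : C(X × X, ℝ)) (ε : ℝ) (ρ : Measure (X × X)) (π : Measure (X × X)) : EReal :=
  if π ≪ ρ ∧ Integrable (llr π ρ) π then
    (((∫ p, c₀ p ∂π) + ε * ((∫ p, llr π ρ p ∂π) - (π Set.univ).toReal + 1) : ℝ) : EReal)
  else ⊤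

/-- Convex conjugate of `entF`, the supremum being taken over finite nonnegative Borel
measures on `X × X`. -/
noncomputable def entFstar {X : Type*} [MeasurableSpace X] [TopologicalSpace X]
    (c₀ : C(X × X, ℝ)) (ε : ℝ) (ρ : Measure (X × X)) (c : C(X × X, ℝ)) : EReal :=
  ⨆ π : {π : Measure (X × X) // IsFiniteMeasure π},
    ((∫ p, c p ∂π.1 : ℝ) : EReal) - entF c₀ ε ρ π.1

/-- The separable cost `φ ⊕ ψ : (x,y) ↦ φ(x) + ψ(y)`. -/
def oplus {X : Type*} [TopologicalSpace X] (φ ψ : C(X, ℝ)) : C(X × X, ℝ) :=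
  ⟨fun p => φ p.1 + ψ p.2, (φ.continuous.comp continuous_fst).add
    (ψ.continuous.comp continuous_snd)⟩

lemma cont_int {Y : Type*} [TopologicalSpace Y] [CompactSpace Y] [MeasurableSpace Y]
    [OpensMeasurableSpace Y] [T2Space Y] {f : Y → ℝ} (hf : Continuous f) (ρ : Measure Y)
    [IsFiniteMeasure ρ] : Integrable f ρ :=
  hf.integrable_of_hasCompactSupport (HasCompactSupport.of_compactSpace f)

lemma young_ineq (t A : ℝ) (ht : 0 ≤ t) : t * A - t * Real.log t + t ≤ Real.exp A := by
  rcases ht.eq_or_lt with h | h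
  · simp [← h]; positivity
  · have h1 : A - Real.log t + 1 ≤ Real.exp (A - Real.log t) := Real.add_one_le_exp _
    rw [Real.exp_sub, Real.exp_log h] at h1
    have h2 : t * (A - Real.log t + 1) ≤ t * (Real.exp A / t) :=
      mul_le_mul_of_nonneg_left h1 ht
    rw [mul_div_cancel₀ _ h.ne'] at h2
    linarith [h2]

lemma entFstar_eq {X : Type*} [MetricSpace X] [CompactSpace X] [MeasurableSpace X] [BorelSpace X]
    (μ ν : Measure X) [IsProbabilityMeasure μ] [IsProbabilityMeasure ν]
    (c₀ : C(X × X, ℝ)) (ε : ℝ) (hε : 0 < ε) (c : C(X × X, ℝ)) :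
    entFstar c₀ ε (μ.prod ν) c =
      ((ε * ∫ p, (Real.exp ((c p - c₀ p) / ε) - 1) ∂(μ.prod ν) : ℝ) : EReal) := by
  set ρ := μ.prod ν with hρ
  have hconta : Continuous (fun p : X × X => (c p - c₀ p) / ε) :=
    (c.continuous.sub c₀.continuous).div_const ε
  set a : X × X → ℝ := fun p => (c p - c₀ p) / ε with hadef
  set g : X × X → ℝ := fun p => Real.exp (a p) with hgdef
  have hcontg : Continuous g := Real.continuous_exp.comp hconta
  have hg0 : ∀ p, 0 ≤ g p := fun p => (Real.exp_pos _).le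
  have hgint : Integrable g ρ := cont_int hcontg ρ
  have hg1int : Integrable (fun p => g p - 1) ρ := hgint.sub (integrable_const 1)
  have hca : ∀ p, ε * a p = c p - c₀ p := fun p => mul_div_cancel₀ _ hε.ne'
  have hgsub : ∫ p, (g p - 1) ∂ρ = (∫ p, g p ∂ρ) - 1 := by
    rw [integral_sub hgint (integrable_const 1), integral_const]
    simp
  refine le_antisymm ?_ ?_
  · -- upper bound
    rw [entFstar]
    refine iSup_le ?_
    rintro ⟨π, hπfin⟩
    haveI := hπfin
    haveI : IsFiniteMeasure ρ := inferInstanceAs (IsFiniteMeasure (μ.prod ν))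
    haveI : π.HaveLebesgueDecomposition ρ := Measure.haveLebesgueDecomposition_of_finiteMeasure
    dsimp only
    by_cases hP : π ≪ ρ ∧ Integrable (llr π ρ) π
    · obtain ⟨hAC, hllr⟩ := hP
      rw [entF, if_pos ⟨hAC, hllr⟩, ← EReal.coe_sub, EReal.coe_le_coe_iff]
      set t : X × X → ℝ := fun x => (π.rnDeriv ρ x).toReal with htdef
      have i1 : Integrable (fun x => t x * c x) ρ := by
        simpa [smul_eq_mul] using
          (MeasureTheory.integrable_rnDeriv_smul_iff (f := fun x => c x) hAC).mpr (cont_int c.continuous π)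
      have i2 : Integrable (fun x => t x * c₀ x) ρ := by
        simpa [smul_eq_mul] using
          (MeasureTheory.integrable_rnDeriv_smul_iff (f := fun x => c₀ x) hAC).mpr (cont_int c₀.continuous π)
      have i3 : Integrable (fun x => t x * llr π ρ x) ρ := by
        simpa [smul_eq_mul] using
          (MeasureTheory.integrable_rnDeriv_smul_iff (f := llr π ρ) hAC).mpr hllr
      have i4 : Integrable t ρ := Measure.integrable_toReal_rnDeriv
      have h1 : ∫ x, t x * c x ∂ρ = ∫ x, c x ∂π := by
        simpa [smul_eq_mul] using MeasureTheory.integral_rnDeriv_smul (f := fun x => c x) hAC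
      have h2 : ∫ x, t x * c₀ x ∂ρ = ∫ x, c₀ x ∂π := by
        simpa [smul_eq_mul] using MeasureTheory.integral_rnDeriv_smul (f := fun x => c₀ x) hAC
      have h3 : ∫ x, t x * llr π ρ x ∂ρ = ∫ x, llr π ρ x ∂π := by
        simpa [smul_eq_mul] using MeasureTheory.integral_rnDeriv_smul (f := llr π ρ) hAC
      have h4 : ∫ x, t x ∂ρ = (π Set.univ).toReal := Measure.integral_toReal_rnDeriv hAC
      set H : X × X → ℝ :=
        fun x => t x * c x - t x * c₀ x - ε * (t x * llr π ρ x) + ε * t x with hHdef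
      have i12 : Integrable (fun x => t x * c x - t x * c₀ x) ρ := i1.sub i2
      have s3 : Integrable (fun x => ε * (t x * llr π ρ x)) ρ := i3.const_mul ε
      have s4 : Integrable (fun x => ε * t x) ρ := i4.const_mul ε
      have i123 : Integrable (fun x => t x * c x - t x * c₀ x - ε * (t x * llr π ρ x)) ρ :=
        i12.sub s3
      have iH : Integrable H ρ := i123.add s4
      have hHval : ∫ x, H x ∂ρ =
          (∫ x, t x * c x ∂ρ) - (∫ x, t x * c₀ x ∂ρ) - ε * (∫ x, t x * llr π ρ x ∂ρ)
            + ε * ∫ x, t x ∂ρ := by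
        simp only [hHdef]
        rw [integral_add i123 s4, integral_sub i12 s3, integral_sub i1 i2,
          integral_const_mul, integral_const_mul]
      have hHle : ∫ x, H x ∂ρ ≤ ∫ x, ε * g x ∂ρ := by
        refine integral_mono iH (hgint.const_mul ε) ?_
        intro x
        have hy := young_ineq (t x) (a x) ENNReal.toReal_nonneg
        have hy' := mul_le_mul_of_nonneg_left hy hε.le
        have hll : llr π ρ x = Real.log (t x) := rfl
        have hc : c x - c₀ x = ε * a x := (hca x).symm
        have hc2 : t x * c x - t x * c₀ x = ε * (t x * a x) := by linear_combination (t x) * hc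
        simp only [hHdef, hll, hgdef]
        linarith [hy', hc2]
      rw [integral_const_mul] at hHle
      rw [hHval, h1, h2, h3, h4] at hHle
      have e1 : ε * ((∫ p, llr π ρ p ∂π) - (π Set.univ).toReal + 1)
          = ε * (∫ p, llr π ρ p ∂π) - ε * (π Set.univ).toReal + ε := by ring
      have e2 : ε * ∫ p, (g p - 1) ∂ρ = ε * (∫ p, g p ∂ρ) - ε := by rw [hgsub]; ring
      rw [e2]
      linarith [hHle, e1.le, e1.ge]
    · rw [entF, if_neg hP]
      have : ((∫ p, c p ∂π : ℝ) : EReal) - ⊤ = ⊥ := by simp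
      rw [this]
      exact bot_le
  · -- lower bound via candidate π₀
    have hmeasg : Measurable (fun p => ENNReal.ofReal (g p)) :=
      ENNReal.measurable_ofReal.comp hcontg.measurable
    set π₀ : Measure (X × X) := ρ.withDensity (fun p => ENNReal.ofReal (g p)) with hπ₀
    haveI hfin : IsFiniteMeasure π₀ := isFiniteMeasure_withDensity_ofReal hgint.hasFiniteIntegral
    have hAC0 : π₀ ≪ ρ := withDensity_absolutelyContinuous ρ _
    have hrn : π₀.rnDeriv ρ =ᵐ[ρ] fun p => ENNReal.ofReal (g p) :=
      Measure.rnDeriv_withDensity ρ hmeasg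
    have hllr_eq : llr π₀ ρ =ᵐ[ρ] a := by
      filter_upwards [hrn] with p hp
      simp only [llr, hp, ENNReal.toReal_ofReal (hg0 p), hgdef, ENNReal.toReal_ofReal (Real.exp_pos (a p)).le, Real.log_exp]
    have hllr_eq' : llr π₀ ρ =ᵐ[π₀] a := hllr_eq.filter_mono hAC0.ae_le
    have hllrint : Integrable (llr π₀ ρ) π₀ := (cont_int hconta π₀).congr hllr_eq'.symm
    have heq1 : ∫ p, llr π₀ ρ p ∂π₀ = ∫ p, a p ∂π₀ := integral_congr_ae hllr_eq'
    have heq2 : ε * ∫ p, a p ∂π₀ = (∫ p, c p ∂π₀) - ∫ p, c₀ p ∂π₀ := by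
      rw [← integral_sub (cont_int c.continuous π₀) (cont_int c₀.continuous π₀),
        ← integral_const_mul]
      exact integral_congr_ae (Filter.Eventually.of_forall fun p => hca p)
    have heq3 : (π₀ Set.univ).toReal = ∫ p, g p ∂ρ := by
      rw [hπ₀, withDensity_apply _ MeasurableSet.univ, Measure.restrict_univ,
        integral_eq_lintegral_of_nonneg_ae (Filter.Eventually.of_forall hg0)
          hgint.aestronglyMeasurable]
    have hval : (∫ p, c p ∂π₀) -
        ((∫ p, c₀ p ∂π₀) + ε * ((∫ p, llr π₀ ρ p ∂π₀) - (π₀ Set.univ).toReal + 1))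
        = ε * ∫ p, (g p - 1) ∂ρ := by
      rw [heq1, heq3, hgsub]
      linear_combination -heq2
    rw [entFstar]
    have hle : ((ε * ∫ p, (g p - 1) ∂ρ : ℝ) : EReal)
        = ((∫ p, c p ∂π₀ : ℝ) : EReal) - entF c₀ ε ρ π₀ := by
      rw [entF, if_pos ⟨hAC0, hllrint⟩, ← EReal.coe_sub, hval]
    rw [hle]
    exact le_iSup (fun π : {π : Measure (X × X) // IsFiniteMeasure π} =>
      ((∫ p, c p ∂π.1 : ℝ) : EReal) - entF c₀ ε ρ π.1) ⟨π₀, hfin⟩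

/-- (Entropy-regularized OT is separably `*`-increasing.)
The conjugate of the entropic objective is `F*(c) = ε ∫ (exp((c−c₀)/ε) − 1) d(μ⊗ν)`;
consequently `φ⊕ψ ≤ c` implies `F*(φ⊕ψ) ≤ F*(c)`. -/
theorem stmt12 {X : Type*} [MetricSpace X] [CompactSpace X] [MeasurableSpace X] [BorelSpace X]
    (μ ν : Measure X) [IsProbabilityMeasure μ] [IsProbabilityMeasure ν]
    (c₀ : C(X × X, ℝ)) (ε : ℝ) (hε : 0 < ε) :
    (∀ c : C(X × X, ℝ),
      entFstar c₀ ε (μ.prod ν) c =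
        ((ε * ∫ p, (Real.exp ((c p - c₀ p) / ε) - 1) ∂(μ.prod ν) : ℝ) : EReal)) ∧
    (∀ (φ ψ : C(X, ℝ)) (c : C(X × X, ℝ)), (∀ x y : X, φ x + ψ y ≤ c (x, y)) →
      entFstar c₀ ε (μ.prod ν) (oplus φ ψ) ≤ entFstar c₀ ε (μ.prod ν) c) := by
  refine ⟨entFstar_eq μ ν c₀ ε hε, ?_⟩
  intro φ ψ c hle
  rw [entFstar_eq μ ν c₀ ε hε, entFstar_eq μ ν c₀ ε hε, EReal.coe_le_coe_iff]
  refine mul_le_mul_of_nonneg_left ?_ hε.le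
  refine integral_mono
    (cont_int (((Real.continuous_exp.comp
      (((oplus φ ψ).continuous.sub c₀.continuous).div_const ε))).sub continuous_const) _)
    (cont_int (((Real.continuous_exp.comp
      ((c.continuous.sub c₀.continuous).div_const ε))).sub continuous_const) _) ?_
  intro p
  have h1 : oplus φ ψ p ≤ c p := by
    obtain ⟨x, y⟩ := p
    exact hle x y
  have h2 : (oplus φ ψ p - c₀ p) / ε ≤ (c p - c₀ p) / ε :=
    div_le_div_of_nonneg_right (by linarith [h1]) hε.le
  exact sub_le_sub_right (Real.exp_le_exp.mpr h2) 1
end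

section
/- (Joint adversarial cost as limit of strongly-coupled costs.) Let X be a compact metric space, T ≥ 2, μ₁,…,μ_T Borel probability measures on X, and for each t ∈ {1,…,T−1} let F_t : M(X×X) → ℝ ∪ {+∞} be proper, convex, weak-* lower semicontinuous, finite at some coupling in Π(μ_t,μ_{t+1}). Let D : C(X×X,ℝ) × C(X×X,ℝ) → [0,+∞) be continuous (for the sup norm) with D(c₁,c₂) = 0 if and only if c₁ = c₂, and assume there is a compact set K ⊂ C(X×X,ℝ) such that F_t* ≡ +∞ outside K for every t. For η ≥ 0 set WR_η = sup over (c₁,…,c_{T−1}) of Σ_{t=1}^{T−1} [ OT_{c_t}(μ_t,μ_{t+1}) − F_t*(c_t) ] − η Σ_{t=1}^{T−2} D(c_t,c_{t+1}). Then as η → +∞, WR_η converges to max_{c ∈ C(X×X,ℝ)} Σ_{t=1}^{T−1} [ OT_c(μ_t,μ_{t+1}) − F_t*(c) ]. -/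
open MeasureTheory Filter Topology

set_option linter.unusedSectionVars false
set_option linter.unnecessarySimpa false
set_option maxHeartbeats 1000000

/-- Integral of a function against a finite signed measure, via Jordan decomposition. -/
noncomputable def sintegral {Y : Type*} [MeasurableSpace Y] (s : SignedMeasure Y) (f : Y → ℝ) : ℝ :=
  (∫ y, f y ∂s.toJordanDecomposition.posPart) - ∫ y, f y ∂s.toJordanDecomposition.negPart

/-- The weak-* topology on finite signed measures, induced by integration against
continuous functions. -/
noncomputable def weakStar (Y : Type*) [MeasurableSpace Y] [TopologicalSpace Y] :
    TopologicalSpace (SignedMeasure Y) :=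
  TopologicalSpace.induced (fun s => (fun c : C(Y, ℝ) => sintegral s c)) Pi.topologicalSpace

/-- `π` is a coupling of `μ` and `ν`. -/
def IsCoupling {X : Type*} [MeasurableSpace X] (μ ν : Measure X) (π : Measure (X × X)) : Prop :=
  IsProbabilityMeasure π ∧ π.map Prod.fst = μ ∧ π.map Prod.snd = ν

/-- The set of couplings `Π(μ,ν)`, as a subtype. -/
def Couplings {X : Type*} [MeasurableSpace X] (μ ν : Measure X) :=
  {π : Measure (X × X) // IsCoupling μ ν π}

/-- A coupling, seen as a finite signed measure. -/
noncomputable def couplingSM {X : Type*} [MeasurableSpace X] {μ ν : Measure X}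
    (π : Couplings μ ν) : SignedMeasure (X × X) :=
  haveI := π.2.1
  π.1.toSignedMeasure

/-- The optimal transport cost `OT_c(μ,ν)` for a continuous ground cost `c`. -/
noncomputable def OTcost {X : Type*} [MeasurableSpace X] [TopologicalSpace X]
    (c : C(X × X, ℝ)) (μ ν : Measure X) : ℝ :=
  ⨅ π : Couplings μ ν, ∫ p, c p ∂π.1

/-- Legendre–Fenchel conjugate of `F : M(X×X) → ℝ ∪ {+∞}`, evaluated at continuous costs. -/
noncomputable def Fstar {X : Type*} [MeasurableSpace X] [TopologicalSpace X]
    (F : SignedMeasure (X × X) → EReal) (c : C(X × X, ℝ)) : EReal :=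
  ⨆ s : SignedMeasure (X × X), ((sintegral s c : ℝ) : EReal) - F s

/-- The coupled time-varying adversarial value `WR_η`, where the sequence of adversarial
costs `c 0, …, c (T'−1)` pays a penalty `η Σ_t D(c_t, c_{t+1})` (with the convention that
the last term vanishes). -/
noncomputable def WR {X : Type*} [MetricSpace X] [CompactSpace X] [MeasurableSpace X]
    [BorelSpace X] (T' : ℕ) (μ : Fin (T' + 1) → Measure X)
    (F : Fin T' → SignedMeasure (X × X) → EReal)
    (D : C(X × X, ℝ) × C(X × X, ℝ) → ℝ) (η : ℝ) : EReal :=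
  ⨆ c : Fin T' → C(X × X, ℝ),
    (∑ t : Fin T',
        (((OTcost (c t) (μ t.castSucc) (μ t.succ) : ℝ) : EReal) - Fstar (F t) (c t)))
      - ((η * ∑ t : Fin T',
          (if h : (t : ℕ) + 1 < T' then D (c t, c ⟨(t : ℕ) + 1, h⟩) else 0) : ℝ) : EReal)

/-! ### Auxiliary lemmas on `EReal` and semicontinuity -/

lemma ereal_add_ne_top {x y : EReal} (hx : x ≠ ⊤) (hy : y ≠ ⊤) : x + y ≠ ⊤ := by
  induction x using EReal.rec <;> induction y using EReal.rec <;>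
    simp_all [← EReal.coe_add]

lemma ereal_sub_real_ne_top {y : EReal} (hy : y ≠ ⊥) (r : ℝ) : (r : EReal) - y ≠ ⊤ := by
  induction y using EReal.rec with
  | bot => simp_all
  | coe q => rw [← EReal.coe_sub]; exact EReal.coe_ne_top _
  | top => simp [EReal.sub_top]

lemma ereal_sub_nonneg_le {x : EReal} {r : ℝ} (hr : 0 ≤ r) : x - (r : EReal) ≤ x := by
  have : x - (r : EReal) ≤ x - (0 : EReal) :=
    EReal.sub_le_sub le_rfl (by exact_mod_cast hr)
  simpa using this

lemma neg_usc {α : Type*} [TopologicalSpace α] {f : α → EReal} (hf : LowerSemicontinuous f) :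
    UpperSemicontinuous (fun x => - f x) := by
  intro x y hy
  have h : -y < f x := EReal.neg_lt_comm.mp hy
  filter_upwards [hf x _ h] with z hz using EReal.neg_lt_comm.mpr hz

lemma usc_add_ne_top {α : Type*} [TopologicalSpace α] {f g : α → EReal}
    (hf : UpperSemicontinuous f) (hg : UpperSemicontinuous g)
    (hf' : ∀ x, f x ≠ ⊤) (hg' : ∀ x, g x ≠ ⊤) :
    UpperSemicontinuous (fun x => f x + g x) :=
  hf.add' hg fun x => EReal.continuousAt_add (Or.inl (hf' x)) (Or.inr (hg' x))

lemma usc_finset_sum {α ι : Type*} [TopologicalSpace α] (s : Finset ι) (f : ι → α → EReal)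
    (hf : ∀ i ∈ s, UpperSemicontinuous (f i)) (hf' : ∀ i ∈ s, ∀ x, f i x ≠ ⊤) :
    UpperSemicontinuous (fun x => ∑ i ∈ s, f i x) ∧ (∀ x, (∑ i ∈ s, f i x) ≠ ⊤) := by
  classical
  induction s using Finset.induction_on with
  | empty => simp [upperSemicontinuous_const]
  | insert a s hnotmem ih =>
    obtain ⟨ih1, ih2⟩ := ih (fun i hi => hf i (Finset.mem_insert_of_mem hi))
      (fun i hi => hf' i (Finset.mem_insert_of_mem hi))
    have ha := hf a (Finset.mem_insert_self a s)
    have ha' := hf' a (Finset.mem_insert_self a s)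
    constructor
    · have := usc_add_ne_top ha ih1 ha' ih2
      simpa [Finset.sum_insert hnotmem] using this
    · intro x
      rw [Finset.sum_insert hnotmem]
      exact ereal_add_ne_top (ha' x) (ih2 x)

lemma ereal_sum_bot {α : Type*} {s : Finset α} {f : α → EReal} {i : α} (hi : i ∈ s)
    (h : f i = ⊥) : ∑ j ∈ s, f j = ⊥ := by
  classical
  rw [← Finset.add_sum_erase s f hi, h, EReal.bot_add]

lemma ereal_coe_sum {ι : Type*} (s : Finset ι) (f : ι → ℝ) :
    ((∑ i ∈ s, f i : ℝ) : EReal) = ∑ i ∈ s, ((f i : ℝ) : EReal) :=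
  map_sum (⟨⟨Real.toEReal, EReal.coe_zero⟩, EReal.coe_add⟩ : ℝ →+ EReal) f s

section Abstract

variable {Y : Type*} [MetricSpace Y]

/-- Penalty sum. -/
noncomputable def pen {Y : Type*} (T' : ℕ) (D : Y × Y → ℝ) (cv : Fin T' → Y) : ℝ :=
  ∑ t : Fin T', (if h : (t : ℕ) + 1 < T' then D (cv t, cv ⟨(t : ℕ) + 1, h⟩) else 0)

lemma pen_nonneg {T' : ℕ} {D : Y × Y → ℝ} (hDpos : ∀ p, 0 ≤ D p) (cv : Fin T' → Y) :
    0 ≤ pen T' D cv := by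
  apply Finset.sum_nonneg
  intro t _
  by_cases h : (t : ℕ) + 1 < T'
  · rw [dif_pos h]; exact hDpos _
  · rw [dif_neg h]

lemma pen_continuous {T' : ℕ} {D : Y × Y → ℝ} (hDcont : Continuous D) :
    Continuous (pen T' D) := by
  apply continuous_finset_sum
  intro t _
  by_cases h : (t : ℕ) + 1 < T'
  · simp only [dif_pos h]
    exact hDcont.comp ((continuous_apply t).prodMk (continuous_apply _))
  · simp only [dif_neg h]
    exact continuous_const

lemma pen_const {T' : ℕ} {D : Y × Y → ℝ} (hDdiv : ∀ p : Y × Y, D p = 0 ↔ p.1 = p.2) (c : Y) :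
    pen T' D (fun _ => c) = 0 := by
  apply Finset.sum_eq_zero
  intro t _
  by_cases h : (t : ℕ) + 1 < T'
  · rw [dif_pos h]; exact (hDdiv (c, c)).mpr rfl
  · rw [dif_neg h]

lemma pen_eq_zero_forall {T' : ℕ} {D : Y × Y → ℝ} (hDpos : ∀ p, 0 ≤ D p)
    (hDdiv : ∀ p : Y × Y, D p = 0 ↔ p.1 = p.2) {cv : Fin T' → Y}
    (h0 : pen T' D cv = 0) (hT' : 1 ≤ T') :
    ∀ t : Fin T', cv t = cv ⟨0, hT'⟩ := by
  have hall : ∀ (t : Fin T') (h1 : (t : ℕ) + 1 < T'), cv t = cv ⟨(t : ℕ) + 1, h1⟩ := by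
    intro t h1
    have h2 := (Finset.sum_eq_zero_iff_of_nonneg (fun u (_ : u ∈ Finset.univ) => by
      by_cases h : (u : ℕ) + 1 < T'
      · rw [dif_pos h]; exact hDpos _
      · rw [dif_neg h])).mp h0 t (Finset.mem_univ t)
    rw [dif_pos h1] at h2
    exact (hDdiv _).mp h2
  intro t
  obtain ⟨k, hk⟩ := t
  induction k with
  | zero => rfl
  | succ m ih =>
    have hm : m < T' := Nat.lt_of_succ_lt hk
    have h2 : cv ⟨m, hm⟩ = cv ⟨m + 1, hk⟩ := hall ⟨m, hm⟩ hk
    rw [← h2]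
    exact ih hm

/-- Abstract key estimate: any real number below the decoupled values is below the joint value. -/
lemma aux_key (T' : ℕ) (hT' : 1 ≤ T') (g : Fin T' → Y → EReal)
    (K : Set Y) (hK : IsCompact K)
    (hg_usc : ∀ t, UpperSemicontinuous (g t)) (hg_ne_top : ∀ t c, g t c ≠ ⊤)
    (hg_bot : ∀ t (c : Y), c ∉ K → g t c = ⊥)
    (M : ℝ) (hgM : ∀ cv : Fin T' → Y, (∀ t, cv t ∈ K) → (∑ t : Fin T', g t (cv t)) ≤ (M : EReal))
    (D : Y × Y → ℝ) (hDcont : Continuous D) (hDpos : ∀ p, 0 ≤ D p)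
    (hDdiv : ∀ p : Y × Y, D p = 0 ↔ p.1 = p.2)
    (b : ℝ)
    (hb : ∀ n : ℕ, ∃ cv : Fin T' → Y,
      (b : EReal) < (∑ t : Fin T', g t (cv t)) - (((n : ℝ) * pen T' D cv : ℝ) : EReal)) :
    (b : EReal) ≤ ⨆ c : Y, ∑ t : Fin T', g t c := by
  classical
  haveI : Nonempty (Fin T') := ⟨⟨0, hT'⟩⟩
  choose cv hcv using hb
  have hmem : ∀ n t, cv n t ∈ K := by
    intro n t
    by_contra hnot
    have hA2 : ∑ u : Fin T', g u (cv n u) = ⊥ :=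
      ereal_sum_bot (Finset.mem_univ t) (hg_bot t _ hnot)
    have := hcv n
    rw [hA2, EReal.bot_sub] at this
    exact absurd this (by simp)
  have hnP_nonneg : ∀ n : ℕ, (0 : ℝ) ≤ (n : ℝ) * pen T' D (cv n) :=
    fun n => mul_nonneg (Nat.cast_nonneg n) (pen_nonneg hDpos (cv n))
  have hAb : ∀ n, (b : EReal) < ∑ t : Fin T', g t (cv n t) := fun n =>
    (hcv n).trans_le (ereal_sub_nonneg_le (hnP_nonneg n))
  have hPn : ∀ n : ℕ, (n : ℝ) * pen T' D (cv n) < M - b := by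
    intro n
    have h2 : (b : EReal) < (M : EReal) - (((n : ℝ) * pen T' D (cv n) : ℝ) : EReal) :=
      lt_of_lt_of_le (hcv n) (EReal.sub_le_sub (hgM (cv n) (hmem n)) le_rfl)
    rw [← EReal.coe_sub] at h2
    have h3 := EReal.coe_lt_coe_iff.mp h2
    linarith
  have hKT : IsCompact (Set.univ.pi fun _ : Fin T' => K) := isCompact_univ_pi fun _ => hK
  obtain ⟨cstar, hcstarK, φ, hφ, hconv2⟩ := hKT.isSeqCompact
    (x := cv) (fun n => Set.mem_univ_pi.mpr (hmem n))
  have hPconv : Tendsto (fun n => pen T' D (cv (φ n))) atTop (𝓝 (pen T' D cstar)) :=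
    ((pen_continuous hDcont).tendsto cstar).comp hconv2
  have hP0 : pen T' D cstar = 0 := by
    by_contra hne
    have hpos : 0 < pen T' D cstar := lt_of_le_of_ne (pen_nonneg hDpos cstar) (Ne.symm hne)
    have h1 : Tendsto (fun n => ((φ n : ℕ) : ℝ)) atTop atTop :=
      tendsto_natCast_atTop_atTop.comp hφ.tendsto_atTop
    have h2 : Tendsto (fun n => ((φ n : ℕ) : ℝ) * pen T' D (cv (φ n))) atTop atTop :=
      Filter.Tendsto.atTop_mul_pos hpos h1 hPconv
    obtain ⟨n, hn2⟩ := (h2.eventually_gt_atTop (M - b)).exists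
    exact absurd (hPn (φ n)) (not_lt.mpr hn2.le)
  have hEqAll := pen_eq_zero_forall hDpos hDdiv hP0 hT'
  have hA_usc : UpperSemicontinuous (fun dv : Fin T' → Y => ∑ t : Fin T', g t (dv t)) :=
    (usc_finset_sum Finset.univ (fun t (dv : Fin T' → Y) => g t (dv t))
      (fun t _ => (hg_usc t).comp (g := fun dv : Fin T' → Y => dv t) (continuous_apply t))
      (fun t _ dv => hg_ne_top t (dv t))).1
  have hA_cstar : (b : EReal) ≤ ∑ t : Fin T', g t (cstar t) := by
    by_contra hlt
    push_neg at hlt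
    have h2 := hA_usc cstar (b : EReal) hlt
    obtain ⟨n, hn3⟩ := (hconv2.eventually h2).exists
    exact absurd (hAb (φ n)) (not_lt.mpr hn3.le)
  calc (b : EReal) ≤ ∑ t : Fin T', g t (cstar t) := hA_cstar
    _ = ∑ t : Fin T', g t (cstar ⟨0, hT'⟩) :=
        Finset.sum_congr rfl fun t _ => by rw [hEqAll t]
    _ ≤ ⨆ c : Y, ∑ t : Fin T', g t c := le_iSup (fun c => ∑ t : Fin T', g t c) _

/-- Abstract attainment of the supremum. -/
lemma aux_attain [Nonempty Y] (T' : ℕ) (hT' : 1 ≤ T') (g : Fin T' → Y → EReal)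
    (K : Set Y) (hK : IsCompact K)
    (hg_usc : ∀ t, UpperSemicontinuous (g t)) (hg_ne_top : ∀ t c, g t c ≠ ⊤)
    (hg_bot : ∀ t (c : Y), c ∉ K → g t c = ⊥) :
    ∃ cs : Y, (∑ t : Fin T', g t cs) = ⨆ c : Y, ∑ t : Fin T', g t c := by
  classical
  haveI : Nonempty (Fin T') := ⟨⟨0, hT'⟩⟩
  set S : EReal := ⨆ c : Y, ∑ t : Fin T', g t c with hSdef
  have hh_usc : UpperSemicontinuous (fun c : Y => ∑ t : Fin T', g t c) :=
    (usc_finset_sum Finset.univ (fun t c => g t c) (fun t _ => hg_usc t)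
      (fun t _ c => hg_ne_top t c)).1
  rcases eq_or_ne S ⊥ with hSb | hSb
  · obtain ⟨c0⟩ := (inferInstance : Nonempty Y)
    refine ⟨c0, le_antisymm (le_iSup (fun c => ∑ t : Fin T', g t c) c0) ?_⟩
    rw [hSb]; exact bot_le
  · have hbs : ∃ bs : ℕ → ℝ, (∀ n, (bs n : EReal) < S) ∧
        Tendsto (fun n => ((bs n : ℝ) : EReal)) atTop (𝓝 S) := by
      rcases eq_or_ne S ⊤ with hSt | hSt
      · refine ⟨fun n => n, fun n => hSt ▸ EReal.coe_lt_top _, ?_⟩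
        rw [hSt, EReal.tendsto_nhds_top_iff_real]
        intro x
        filter_upwards [eventually_gt_atTop ⌈x⌉₊] with n hn
        exact_mod_cast lt_of_le_of_lt (Nat.le_ceil x) (by exact_mod_cast hn)
      · have hS_eq : S = ((S.toReal : ℝ) : EReal) := (EReal.coe_toReal hSt hSb).symm
        refine ⟨fun n : ℕ => S.toReal - 1 / ((n : ℝ) + 1), ?_, ?_⟩
        · intro n
          have h0 : (0 : ℝ) < 1 / ((n : ℝ) + 1) := by positivity
          have h1 : (S.toReal - 1 / ((n : ℝ) + 1) : ℝ) < S.toReal := by linarith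
          calc ((S.toReal - 1 / ((n : ℝ) + 1) : ℝ) : EReal) < (S.toReal : EReal) :=
                EReal.coe_lt_coe_iff.mpr h1
            _ = S := EReal.coe_toReal hSt hSb
        · have h1 : Tendsto (fun n : ℕ => S.toReal - 1 / ((n : ℝ) + 1)) atTop (𝓝 (S.toReal - 0)) :=
            tendsto_const_nhds.sub tendsto_one_div_add_atTop_nhds_zero_nat
          rw [sub_zero] at h1
          have h2 := (continuous_coe_real_ereal.tendsto S.toReal).comp h1
          rw [show ((S.toReal : ℝ) : EReal) = S from EReal.coe_toReal hSt hSb] at h2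
          exact h2
    obtain ⟨bs, hbs1, hbs2⟩ := hbs
    have hn : ∀ n : ℕ, ∃ c : Y, (bs n : EReal) < ∑ t : Fin T', g t c := by
      intro n
      have h1 := hbs1 n
      rw [hSdef] at h1
      exact lt_iSup_iff.mp h1
    choose cn hcn using hn
    have hmem : ∀ n, cn n ∈ K := by
      intro n
      by_contra hnot
      have hA2 : ∑ t : Fin T', g t (cn n) = ⊥ :=
        ereal_sum_bot (Finset.mem_univ ⟨0, hT'⟩) (hg_bot _ _ hnot)
      have h5 := hcn n
      rw [hA2] at h5
      exact absurd h5 (by simp)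
    obtain ⟨cstar, hcstarK, φ, hφ, hconv2⟩ := hK.isSeqCompact (x := cn) hmem
    refine ⟨cstar, le_antisymm (le_iSup (fun c => ∑ t : Fin T', g t c) cstar) ?_⟩
    by_contra hlt
    push_neg at hlt
    obtain ⟨y, hy1, hy2⟩ := EReal.exists_between_coe_real hlt
    have h2 := hh_usc cstar (y : EReal) hy1
    have h3 : ∀ᶠ n in atTop, ∑ t : Fin T', g t (cn (φ n)) < (y : EReal) :=
      hconv2.eventually h2
    have h4 : ∀ᶠ n in atTop, (y : EReal) < (bs (φ n) : EReal) :=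
      hφ.tendsto_atTop.eventually (hbs2.eventually_const_lt hy2)
    obtain ⟨n, hn3, hn4⟩ := (h3.and h4).exists
    exact absurd ((hn4.trans (hcn (φ n))).trans hn3) (by simp)

end Abstract

/-! ### integrals of continuous maps -/

section X
variable {X : Type*} [MetricSpace X] [CompactSpace X] [MeasurableSpace X] [BorelSpace X]

lemma cm_integrable (c : C(X × X, ℝ)) (ρ : Measure (X × X)) [IsFiniteMeasure ρ] :
    Integrable (fun p => c p) ρ :=
  c.continuous.integrable_of_hasCompactSupport ((isClosed_tsupport _).isCompact)

lemma cm_integral_abs_le (c : C(X × X, ℝ)) (ρ : Measure (X × X)) [IsFiniteMeasure ρ] :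
    |∫ p, c p ∂ρ| ≤ ‖c‖ * (ρ Set.univ).toReal := by
  have := norm_integral_le_of_norm_le_const (μ := ρ) (f := fun p => c p) (C := ‖c‖)
    (Filter.Eventually.of_forall fun x => c.norm_coe_le_norm x)
  simp at this; exact this

lemma cm_integral_continuous (ρ : Measure (X × X)) [IsFiniteMeasure ρ] :
    Continuous (fun c : C(X × X, ℝ) => ∫ p, c p ∂ρ) := by
  refine (LipschitzWith.of_dist_le_mul (K := (ρ Set.univ).toNNReal) ?_).continuous
  intro c c'
  rw [Real.dist_eq, dist_eq_norm]
  have h1 : ∫ p, c p ∂ρ - ∫ p, c' p ∂ρ = ∫ p, (c - c') p ∂ρ := by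
    rw [← integral_sub (cm_integrable c ρ) (cm_integrable c' ρ)]
    simp
  rw [h1]
  calc |∫ p, (c - c') p ∂ρ| ≤ ‖c - c'‖ * (ρ Set.univ).toReal := cm_integral_abs_le _ ρ
    _ = (ρ Set.univ).toNNReal * ‖c - c'‖ := by
        rw [mul_comm, ENNReal.toReal]

lemma measure_toJD (ρ : Measure (X × X)) [IsFiniteMeasure ρ] :
    ρ.toSignedMeasure.toJordanDecomposition
      = ⟨ρ, 0, Measure.MutuallySingular.zero_right⟩ := by
  set j : JordanDecomposition (X × X) := ⟨ρ, 0, Measure.MutuallySingular.zero_right⟩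
  have hj : j.toSignedMeasure = ρ.toSignedMeasure := by
    rw [JordanDecomposition.toSignedMeasure]
    simp [j, Measure.toSignedMeasure_zero]
  rw [← hj, JordanDecomposition.toJordanDecomposition_toSignedMeasure]

lemma sintegral_measure (ρ : Measure (X × X)) [IsFiniteMeasure ρ] (c : C(X × X, ℝ)) :
    sintegral ρ.toSignedMeasure (fun p => c p) = ∫ p, c p ∂ρ := by
  rw [sintegral, measure_toJD]
  simp

lemma sintegral_continuous (s : SignedMeasure (X × X)) :
    Continuous (fun c : C(X × X, ℝ) => sintegral s (fun p => c p)) :=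
  (cm_integral_continuous _).sub (cm_integral_continuous _)

/-! ### couplings and OT cost -/

variable {μ ν : Measure X} [IsProbabilityMeasure μ] [IsProbabilityMeasure ν]

instance couplings_nonempty : Nonempty (Couplings μ ν) := by
  refine ⟨⟨μ.prod ν, ⟨inferInstance, ?_, ?_⟩⟩⟩
  · simpa [Measure.fst] using (Measure.fst_prod (μ := μ) (ν := ν))
  · simpa [Measure.snd] using (Measure.snd_prod (μ := μ) (ν := ν))

lemma coupling_integral_abs_le (π : Couplings μ ν) (c : C(X × X, ℝ)) :
    |∫ p, c p ∂π.1| ≤ ‖c‖ := by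
  haveI := π.2.1
  simpa using cm_integral_abs_le c π.1

lemma OT_bddBelow (c : C(X × X, ℝ)) :
    BddBelow (Set.range fun π : Couplings μ ν => ∫ p, c p ∂π.1) := by
  refine ⟨-‖c‖, ?_⟩
  rintro x ⟨π, rfl⟩
  exact (abs_le.mp (coupling_integral_abs_le π c)).1

lemma OT_ge (c : C(X × X, ℝ)) : -‖c‖ ≤ OTcost c μ ν :=
  le_ciInf fun π => (abs_le.mp (coupling_integral_abs_le π c)).1

lemma OT_le (c : C(X × X, ℝ)) : OTcost c μ ν ≤ ‖c‖ := by
  obtain ⟨π⟩ := couplings_nonempty (μ := μ) (ν := ν)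
  exact (ciInf_le (OT_bddBelow c) π).trans (abs_le.mp (coupling_integral_abs_le π c)).2

lemma OT_abs_le (c : C(X × X, ℝ)) : |OTcost c μ ν| ≤ ‖c‖ :=
  abs_le.mpr ⟨neg_le.mp (neg_le.mp (neg_neg ‖c‖ ▸ OT_ge c)), OT_le c⟩

lemma OT_lip (c c' : C(X × X, ℝ)) : OTcost c μ ν ≤ OTcost c' μ ν + ‖c - c'‖ := by
  have key : ∀ π : Couplings μ ν, OTcost c μ ν - ‖c - c'‖ ≤ ∫ p, c' p ∂π.1 := by
    intro π
    haveI := π.2.1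
    have h1 : ∫ p, c p ∂π.1 - ∫ p, c' p ∂π.1 = ∫ p, (c - c') p ∂π.1 := by
      rw [← integral_sub (cm_integrable c π.1) (cm_integrable c' π.1)]; simp
    have h2 : ∫ p, c p ∂π.1 - ∫ p, c' p ∂π.1 ≤ ‖c - c'‖ := by
      rw [h1]
      exact (le_abs_self _).trans (coupling_integral_abs_le π (c - c'))
    have h3 : OTcost c μ ν ≤ ∫ p, c p ∂π.1 := ciInf_le (OT_bddBelow c) π
    linarith
  have h4 : OTcost c μ ν - ‖c - c'‖ ≤ OTcost c' μ ν := le_ciInf key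
  linarith

lemma OT_continuous : Continuous (fun c : C(X × X, ℝ) => OTcost c μ ν) := by
  refine (LipschitzWith.of_dist_le_mul (K := 1) ?_).continuous
  intro c c'
  rw [Real.dist_eq, dist_eq_norm, NNReal.coe_one, one_mul]
  rw [abs_sub_le_iff]
  constructor
  · linarith [OT_lip (μ := μ) (ν := ν) c c']
  · have := OT_lip (μ := μ) (ν := ν) c' c
    rw [show c' - c = -(c - c') by ring, norm_neg] at this
    linarith

/-! ### Fstar -/

lemma Fstar_lb (F : SignedMeasure (X × X) → EReal) (s : SignedMeasure (X × X)) (c : C(X × X, ℝ)) :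
    ((sintegral s (fun p => c p) : ℝ) : EReal) - F s ≤ Fstar F c :=
  le_iSup (fun s : SignedMeasure (X × X) => ((sintegral s (fun p => c p) : ℝ) : EReal) - F s) s

lemma Fstar_lsc (F : SignedMeasure (X × X) → EReal) : LowerSemicontinuous (Fstar F) := by
  apply lowerSemicontinuous_iSup
  intro s
  rcases eq_or_ne (F s) ⊤ with h | h
  · have : (fun c : C(X × X, ℝ) => ((sintegral s (fun p => c p) : ℝ) : EReal) - F s)
        = fun _ => (⊥ : EReal) := by
      funext c; rw [h, EReal.sub_top]
    rw [this]; exact lowerSemicontinuous_const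
  rcases eq_or_ne (F s) ⊥ with h' | h'
  · have : (fun c : C(X × X, ℝ) => ((sintegral s (fun p => c p) : ℝ) : EReal) - F s)
        = fun _ => (⊤ : EReal) := by
      funext c; rw [h', EReal.coe_sub_bot]
    rw [this]; exact lowerSemicontinuous_const
  · lift F s to ℝ using ⟨h, h'⟩ with r hr
    have : (fun c : C(X × X, ℝ) => ((sintegral s (fun p => c p) : ℝ) : EReal) - (r : EReal))
        = fun c => (((sintegral s (fun p => c p) - r : ℝ)) : EReal) := by
      funext c; rw [EReal.coe_sub]
    rw [this]
    exact (continuous_coe_real_ereal.comp ((sintegral_continuous s).sub continuous_const)).lowerSemicontinuous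

end X

/-- (Joint adversarial cost as limit of strongly-coupled costs.)
As `η → +∞`, `WR_η` converges to the joint adversarial value
`max_c Σ_t OT_c(μ_t,μ_{t+1}) − F_t*(c)`, which is attained. -/
theorem stmt17 {X : Type*} [MetricSpace X] [CompactSpace X] [MeasurableSpace X] [BorelSpace X]
    (T' : ℕ) (hT' : 1 ≤ T')
    (μ : Fin (T' + 1) → Measure X) (hμ : ∀ s, IsProbabilityMeasure (μ s))
    (F : Fin T' → SignedMeasure (X × X) → EReal)
    (hbot : ∀ t s, F t s ≠ ⊥)
    (hproper : ∀ t, ∃ s, F t s ≠ ⊤)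
    (hconv : ∀ t, ∀ s₁ s₂ : SignedMeasure (X × X), ∀ a b : ℝ, 0 ≤ a → 0 ≤ b → a + b = 1 →
      F t (a • s₁ + b • s₂) ≤ (a : EReal) * F t s₁ + (b : EReal) * F t s₂)
    (hlsc : ∀ t, @LowerSemicontinuous (SignedMeasure (X × X)) EReal (weakStar (X × X)) _ (F t))
    (hfin : ∀ t, ∃ π₀ : Couplings (μ t.castSucc) (μ t.succ), F t (couplingSM π₀) < ⊤)
    (D : C(X × X, ℝ) × C(X × X, ℝ) → ℝ)
    (hDcont : Continuous D)
    (hDpos : ∀ p, 0 ≤ D p)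
    (hDdiv : ∀ p : C(X × X, ℝ) × C(X × X, ℝ), D p = 0 ↔ p.1 = p.2)
    (K : Set C(X × X, ℝ)) (hK : IsCompact K)
    (hKtop : ∀ t, ∀ c ∉ K, Fstar (F t) c = ⊤) :
    Tendsto (fun η : ℝ => WR T' μ F D η) atTop
      (𝓝 (⨆ c : C(X × X, ℝ), ∑ t : Fin T',
        (((OTcost c (μ t.castSucc) (μ t.succ) : ℝ) : EReal) - Fstar (F t) c))) ∧
    ∃ cs : C(X × X, ℝ),
      (∑ t : Fin T', (((OTcost cs (μ t.castSucc) (μ t.succ) : ℝ) : EReal) - Fstar (F t) cs)) =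
        ⨆ c : C(X × X, ℝ), ∑ t : Fin T',
          (((OTcost c (μ t.castSucc) (μ t.succ) : ℝ) : EReal) - Fstar (F t) c) := by
  classical
  haveI : Nonempty (Fin T') := ⟨⟨0, hT'⟩⟩
  -- finiteness data for the `F t`
  have hr : ∀ t : Fin T', F t (couplingSM (hfin t).choose)
      = (((F t (couplingSM (hfin t).choose)).toReal : ℝ) : EReal) :=
    fun t => (EReal.coe_toReal (hfin t).choose_spec.ne (hbot t _)).symm
  -- lower bound for Fstar
  have hFstar_lb : ∀ (t : Fin T') (c : C(X × X, ℝ)),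
      ((∫ p, c p ∂((hfin t).choose).1 - (F t (couplingSM (hfin t).choose)).toReal : ℝ) : EReal)
        ≤ Fstar (F t) c := by
    intro t c
    have h1 := Fstar_lb (F t) (couplingSM (hfin t).choose) c
    haveI := ((hfin t).choose).2.1
    rw [hr t] at h1
    have h2 : sintegral (couplingSM (hfin t).choose) (fun p => c p)
        = ∫ p, c p ∂((hfin t).choose).1 := sintegral_measure _ c
    rw [h2] at h1
    rw [EReal.coe_sub]
    exact h1
  have hFstar_ne_bot : ∀ (t : Fin T') (c : C(X × X, ℝ)), Fstar (F t) c ≠ ⊥ := by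
    intro t c h
    have h1 := hFstar_lb t c
    rw [h, le_bot_iff] at h1
    exact EReal.coe_ne_bot _ h1
  -- properties of the summands
  have hg_ne_top : ∀ (t : Fin T') (c : C(X × X, ℝ)),
      (((OTcost c (μ t.castSucc) (μ t.succ) : ℝ) : EReal) - Fstar (F t) c) ≠ ⊤ :=
    fun t c => ereal_sub_real_ne_top (hFstar_ne_bot t c) _
  have hg_usc : ∀ t : Fin T', UpperSemicontinuous
      (fun c : C(X × X, ℝ) => ((OTcost c (μ t.castSucc) (μ t.succ) : ℝ) : EReal)
        - Fstar (F t) c) := by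
    intro t
    haveI := hμ t.castSucc; haveI := hμ t.succ
    have h1 : Continuous fun c : C(X × X, ℝ) =>
        ((OTcost c (μ t.castSucc) (μ t.succ) : ℝ) : EReal) :=
      continuous_coe_real_ereal.comp OT_continuous
    have h2 : UpperSemicontinuous fun c : C(X × X, ℝ) => - Fstar (F t) c :=
      neg_usc (Fstar_lsc (F t))
    have h3 : UpperSemicontinuous fun c : C(X × X, ℝ) =>
        ((OTcost c (μ t.castSucc) (μ t.succ) : ℝ) : EReal) + (- Fstar (F t) c) :=
      h1.upperSemicontinuous.add' h2
        (fun c => EReal.continuousAt_add (Or.inl (EReal.coe_ne_top _))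
          (Or.inl (EReal.coe_ne_bot _)))
    simpa [sub_eq_add_neg] using h3
  have hg_bot : ∀ (t : Fin T') (c : C(X × X, ℝ)), c ∉ K →
      (((OTcost c (μ t.castSucc) (μ t.succ) : ℝ) : EReal) - Fstar (F t) c) = ⊥ := by
    intro t c hc
    rw [hKtop t c hc, EReal.sub_top]
  -- uniform upper bound on K
  obtain ⟨R, hR⟩ := isBounded_iff_forall_norm_le.mp hK.isBounded
  have hgB : ∀ (t : Fin T') (c : C(X × X, ℝ)), c ∈ K →
      (((OTcost c (μ t.castSucc) (μ t.succ) : ℝ) : EReal) - Fstar (F t) c)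
        ≤ ((R + R + (F t (couplingSM (hfin t).choose)).toReal : ℝ) : EReal) := by
    intro t c hc
    haveI := hμ t.castSucc; haveI := hμ t.succ
    have h1 := hFstar_lb t c
    have h2 : (((OTcost c (μ t.castSucc) (μ t.succ) : ℝ) : EReal) - Fstar (F t) c)
        ≤ ((OTcost c (μ t.castSucc) (μ t.succ) : ℝ) : EReal)
          - ((∫ p, c p ∂((hfin t).choose).1
              - (F t (couplingSM (hfin t).choose)).toReal : ℝ) : EReal) :=
      EReal.sub_le_sub le_rfl h1
    refine h2.trans ?_
    rw [show ((OTcost c (μ t.castSucc) (μ t.succ) : ℝ) : EReal)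
          - ((∫ p, c p ∂((hfin t).choose).1
              - (F t (couplingSM (hfin t).choose)).toReal : ℝ) : EReal)
        = ((OTcost c (μ t.castSucc) (μ t.succ)
            - (∫ p, c p ∂((hfin t).choose).1
              - (F t (couplingSM (hfin t).choose)).toReal) : ℝ) : EReal) from
      (EReal.coe_sub _ _).symm]
    apply EReal.coe_le_coe_iff.mpr
    have h4 : OTcost c (μ t.castSucc) (μ t.succ) ≤ ‖c‖ := OT_le c
    have h5 : -‖c‖ ≤ ∫ p, c p ∂((hfin t).choose).1 :=
      (abs_le.mp (coupling_integral_abs_le (hfin t).choose c)).1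
    have h6 : ‖c‖ ≤ R := hR c hc
    linarith
  have hgM : ∀ cv : Fin T' → C(X × X, ℝ), (∀ t, cv t ∈ K) →
      (∑ t : Fin T', (((OTcost (cv t) (μ t.castSucc) (μ t.succ) : ℝ) : EReal)
          - Fstar (F t) (cv t)))
        ≤ ((∑ t : Fin T', (R + R + (F t (couplingSM (hfin t).choose)).toReal) : ℝ) : EReal) := by
    intro cv hcv
    calc ∑ t : Fin T', (((OTcost (cv t) (μ t.castSucc) (μ t.succ) : ℝ) : EReal)
            - Fstar (F t) (cv t))
        ≤ ∑ t : Fin T', ((R + R + (F t (couplingSM (hfin t).choose)).toReal : ℝ) : EReal) :=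
          Finset.sum_le_sum fun t _ => hgB t (cv t) (hcv t)
      _ = ((∑ t : Fin T', (R + R + (F t (couplingSM (hfin t).choose)).toReal) : ℝ) : EReal) :=
          (ereal_coe_sum _ _).symm
  -- lower bound: the joint value is below every `WR η`
  have hWR_ge : ∀ η : ℝ,
      (⨆ c : C(X × X, ℝ), ∑ t : Fin T',
        (((OTcost c (μ t.castSucc) (μ t.succ) : ℝ) : EReal) - Fstar (F t) c))
        ≤ WR T' μ F D η := by
    intro η
    refine iSup_le fun c => ?_
    have h2 : (∑ t : Fin T', (((OTcost ((fun _ : Fin T' => c) t) (μ t.castSucc) (μ t.succ)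
          : ℝ) : EReal) - Fstar (F t) ((fun _ : Fin T' => c) t)))
        - ((η * pen T' D (fun _ : Fin T' => c) : ℝ) : EReal) ≤ WR T' μ F D η :=
      le_iSup (fun cv : Fin T' → C(X × X, ℝ) =>
        (∑ t : Fin T', (((OTcost (cv t) (μ t.castSucc) (μ t.succ) : ℝ) : EReal)
            - Fstar (F t) (cv t)))
          - ((η * pen T' D cv : ℝ) : EReal)) (fun _ => c)
    rw [pen_const hDdiv c, mul_zero] at h2
    simpa [sub_eq_add_neg] using h2
  have hWR_antitone : Antitone (fun η : ℝ => WR T' μ F D η) := by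
    intro η₁ η₂ h12
    show WR T' μ F D η₂ ≤ WR T' μ F D η₁
    have hunf : ∀ η : ℝ, WR T' μ F D η
        = ⨆ cv : Fin T' → C(X × X, ℝ),
            (∑ t : Fin T', (((OTcost (cv t) (μ t.castSucc) (μ t.succ) : ℝ) : EReal)
              - Fstar (F t) (cv t)))
            - ((η * pen T' D cv : ℝ) : EReal) := fun _ => rfl
    rw [hunf η₁, hunf η₂]
    refine iSup_mono fun cv => ?_
    refine EReal.sub_le_sub le_rfl (EReal.coe_le_coe_iff.mpr ?_)
    exact mul_le_mul_of_nonneg_right h12 (pen_nonneg hDpos cv)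
  -- key upper bound
  have hkey : ∀ b : ℝ, (b : EReal) < (⨅ η : ℝ, WR T' μ F D η) →
      (b : EReal) ≤ ⨆ c : C(X × X, ℝ), ∑ t : Fin T',
        (((OTcost c (μ t.castSucc) (μ t.succ) : ℝ) : EReal) - Fstar (F t) c) := by
    intro b hb
    refine aux_key T' hT'
      (fun t c => ((OTcost c (μ t.castSucc) (μ t.succ) : ℝ) : EReal) - Fstar (F t) c)
      K hK hg_usc hg_ne_top hg_bot
      (∑ t : Fin T', (R + R + (F t (couplingSM (hfin t).choose)).toReal)) hgM
      D hDcont hDpos hDdiv b ?_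
    intro n
    have h1 : (b : EReal) < WR T' μ F D (n : ℝ) := hb.trans_le (iInf_le _ (n : ℝ))
    exact lt_iSup_iff.mp h1
  -- identification of the infimum
  have hIS : (⨅ η : ℝ, WR T' μ F D η)
      = ⨆ c : C(X × X, ℝ), ∑ t : Fin T',
        (((OTcost c (μ t.castSucc) (μ t.succ) : ℝ) : EReal) - Fstar (F t) c) := by
    refine le_antisymm ?_ (le_iInf fun η => hWR_ge η)
    by_contra hlt
    push_neg at hlt
    obtain ⟨y, hy1, hy2⟩ := EReal.exists_between_coe_real hlt
    exact absurd (hkey y hy2) (not_le.mpr hy1)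
  constructor
  · rw [← hIS]
    exact tendsto_atTop_iInf hWR_antitone
  · exact aux_attain T' hT'
      (fun t c => ((OTcost c (μ t.castSucc) (μ t.succ) : ℝ) : EReal) - Fstar (F t) c)
      K hK hg_usc hg_ne_top hg_bot
end
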